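/- arXiv:2509.09039 — 10 statements merged into one kernel-verified Lean document; each statement's English description precedes it below -/
import Mathlib

section
/- Let u ≥ 2, 1 ≤ s ≤ u−1 with gcd(u,s) = 1, let m ≥ 1 and n = mu + s. Consider functions f : ZMod n → Bool having exactly u values equal to true and such that, reading cyclically, the multiset of gaps (a gap is the number of consecutive false values strictly between two cyclically consecutive true positions) consists of exactly s gaps equal to m and u−s gaps equal to m−1. Then the number of orbits of the translation (rotation) action of ZMod n on this set of functions equals (1/u)·(u choose s). -/
/-- The rotation (translation) setoid on two-colourings of `ZMod N`. -/
def rotSetoid (N : ℕ) : Setoid (ZMod N → Bool) where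
  r f g := ∃ t : ZMod N, ∀ x, g x = f (x + t)
  iseqv := by
    refine ⟨fun f => ⟨0, fun x => by rw [add_zero]⟩, ?_, ?_⟩
    · rintro f g ⟨t, h⟩
      exact ⟨-t, fun x => by rw [h (x + -t), neg_add_cancel_right]⟩
    · rintro f g k ⟨t₁, h₁⟩ ⟨t₂, h₂⟩
      exact ⟨t₂ + t₁, fun x => by rw [h₂ x, h₁ (x + t₂), add_assoc]⟩

/-- `gapEq N g f x` says that `x` is a `true` position of `f : ZMod N → Bool` and the gap
following it is exactly `g`: the `g` positions `x+1, …, x+g` are `false` and `x+g+1` is `true`. -/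
def gapEq (N g : ℕ) (f : ZMod N → Bool) (x : ZMod N) : Prop :=
  f x = true ∧ (∀ j : ℕ, 1 ≤ j → j ≤ g → f (x + (j : ZMod N)) = false) ∧
    f (x + ((g + 1 : ℕ) : ZMod N)) = true


set_option linter.unusedSectionVars false
set_option linter.unusedVariables false
open scoped Classical


lemma card_sigma_const {ι : Type*} [Finite ι] (β : ι → Type*) [∀ i, Finite (β i)] (k : ℕ)
    (h : ∀ i, Nat.card (β i) = k) : Nat.card (Σ i, β i) = Nat.card ι * k := by
  classical
  letI := Fintype.ofFinite ι
  letI : ∀ i, Fintype (β i) := fun i => Fintype.ofFinite _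
  simp only [Nat.card_eq_fintype_card, Fintype.card_sigma]
  have : ∀ i : ι, Fintype.card (β i) = k := by
    intro i; rw [← Nat.card_eq_fintype_card, h]
  simp [this, Finset.sum_const, Finset.card_univ, Nat.card_eq_fintype_card]

lemma card_eq_card_quot_mul {α : Type*} [Finite α] (s : Setoid α) (k : ℕ)
    (h : ∀ q : Quotient s, Nat.card {a : α // Quotient.mk s a = q} = k) :
    Nat.card α = Nat.card (Quotient s) * k := by
  rw [← Nat.card_congr (Equiv.sigmaFiberEquiv (Quotient.mk s))]
  exact card_sigma_const _ k h

lemma addOrderOf_dvd_card_of_invariant {G : Type*} [AddCommGroup G] [Finite G] (t : G)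
    {A : Set G} (hA : ∀ x ∈ A, x + t ∈ A) : addOrderOf t ∣ Nat.card A := by
  classical
  set k := addOrderOf t with hkdef
  have hk : 0 < k := addOrderOf_pos t
  have hkt : k • t = 0 := addOrderOf_nsmul_eq_zero t
  have hmulk : ∀ j : ℕ, (j * k) • t = 0 := by
    intro j; rw [mul_comm, mul_nsmul, hkt, smul_zero]
  have hAn : ∀ (j : ℕ) (x : G), x ∈ A → x + j • t ∈ A := by
    intro j
    induction j with
    | zero => intro x hx; simpa using hx
    | succ j ih =>
      intro x hx
      have := hA _ (ih x hx)
      rwa [add_assoc, ← succ_nsmul] at this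
  have hback : ∀ (j : ℕ) (x y : G), y = x + j • t → x = y + (j * (k - 1)) • t := by
    intro j x y hy
    rw [hy, add_assoc, ← add_nsmul]
    obtain ⟨k', hk'⟩ : ∃ k', k = k' + 1 := ⟨k - 1, by omega⟩
    have hjk : j + j * (k - 1) = j * k := by rw [hk']; simp; ring
    rw [hjk, hmulk, add_zero]
  let sd : Setoid A :=
    { r := fun a b => ∃ j : ℕ, (b : G) = a + j • t
      iseqv := by
        refine ⟨fun a => ⟨0, by simp⟩, ?_, ?_⟩
        · rintro a b ⟨j, hj⟩
          exact ⟨j * (k - 1), hback j a b hj⟩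
        · rintro a b c ⟨j, hj⟩ ⟨j', hj'⟩
          exact ⟨j + j', by rw [hj', hj, add_assoc, add_nsmul]⟩ }
  have hfib : ∀ q : Quotient sd, Nat.card {a : A // Quotient.mk sd a = q} = k := by
    intro q
    obtain ⟨a₀, rfl⟩ := Quotient.exists_rep q
    let e : Fin k → {a : A // Quotient.mk sd a = Quotient.mk sd a₀} := fun j =>
      ⟨⟨(a₀ : G) + (j : ℕ) • t, hAn _ _ a₀.2⟩,
        Quotient.sound (Setoid.symm ⟨(j : ℕ), rfl⟩)⟩
    have hinj : Function.Injective e := by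
      intro j j' hjj
      have h1 : ((e j : A) : G) = ((e j' : A) : G) := by rw [hjj]
      simp only [e] at h1
      have h2 : (j : ℕ) • t = (j' : ℕ) • t := add_left_cancel h1
      have key : ∀ (a b : ℕ), a ≤ b → b < k → a • t = b • t → a = b := by
        intro a b hab hbk hs
        have hsub : (b - a) • t + a • t = b • t := by rw [← add_nsmul]; congr 1; omega
        rw [hs] at hsub
        have h0 : (b - a) • t = 0 := add_right_cancel (hsub.trans (zero_add (b • t)).symm)
        have hdvd : k ∣ (b - a) := addOrderOf_dvd_of_nsmul_eq_zero h0
        have := Nat.eq_zero_of_dvd_of_lt hdvd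
        omega
      rcases le_total (j : ℕ) (j' : ℕ) with h | h
      · exact Fin.ext (key _ _ h j'.2 h2)
      · exact Fin.ext ((key _ _ h j.2 h2.symm).symm)
    have hsurj : Function.Surjective e := by
      rintro ⟨b, hb⟩
      obtain ⟨j, hj⟩ : ∃ j : ℕ, (b : G) = (a₀ : G) + j • t := Setoid.symm (Quotient.exact hb)
      refine ⟨⟨j % k, Nat.mod_lt _ hk⟩, ?_⟩
      apply Subtype.ext; apply Subtype.ext
      simp only [e]
      have hmod : (j % k) • t = j • t := by
        conv_rhs => rw [← Nat.mod_add_div j k, add_nsmul, mul_comm k (j/k), hmulk, add_zero]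
      rw [hmod]
      exact hj.symm
    rw [← Nat.card_eq_of_bijective e ⟨hinj, hsurj⟩]
    simp
  have := card_eq_card_quot_mul sd k hfib
  exact Dvd.intro _ (by rw [this, mul_comm])

/-- the two gap conditions are mutually exclusive (for `m ≥ 1`). -/
lemma gap_disjoint {N m : ℕ} (hm : 1 ≤ m) {f : ZMod N → Bool} {x : ZMod N}
    (h1 : gapEq N m f x) (h2 : gapEq N (m - 1) f x) : False := by
  have hfalse : f (x + (m : ZMod N)) = false := h1.2.1 m hm le_rfl
  have htrue : f (x + ((m - 1 + 1 : ℕ) : ZMod N)) = true := h2.2.2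
  rw [show m - 1 + 1 = m by omega] at htrue
  rw [htrue] at hfalse
  simp at hfalse



namespace NecklaceAux


/-- The step of the walk at `x`: gap plus one. -/
noncomputable def wstep (N m : ℕ) (f : ZMod N → Bool) (x : ZMod N) : ℕ :=
  m + (if gapEq N m f x then 1 else 0)

lemma wstep_eq_iff {N m : ℕ} {f : ZMod N → Bool} {x : ZMod N} :
    wstep N m f x = m + 1 ↔ gapEq N m f x := by
  by_cases h : gapEq N m f x <;> simp [wstep, h]

lemma wstep_eq_or {N m : ℕ} (f : ZMod N → Bool) (x : ZMod N) :
    wstep N m f x = m ∨ wstep N m f x = m + 1 := by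
  by_cases h : gapEq N m f x <;> simp [wstep, h]

lemma wstep_ge {N m : ℕ} (f : ZMod N → Bool) (x : ZMod N) : m ≤ wstep N m f x :=
  Nat.le_add_right _ _

lemma wstep_le {N m : ℕ} (f : ZMod N → Bool) (x : ZMod N) : wstep N m f x ≤ m + 1 := by
  rcases wstep_eq_or (m := m) f x with h | h <;> omega

noncomputable def wpos (N m : ℕ) (f : ZMod N → Bool) (x₀ : ZMod N) : ℕ → ZMod N
  | 0 => x₀
  | i + 1 => wpos N m f x₀ i + ((wstep N m f (wpos N m f x₀ i) : ℕ) : ZMod N)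

section Walk

variable {u s m : ℕ} {f : ZMod (m * u + s) → Bool}

local notation "N" => m * u + s

lemma valid_gap_total [NeZero (m * u + s)] (hm : 1 ≤ m) (hsu : s ≤ u)
    (h1 : Nat.card {x : ZMod N // f x = true} = u)
    (h2 : Nat.card {x : ZMod N // gapEq N m f x} = s)
    (h3 : Nat.card {x : ZMod N // gapEq N (m - 1) f x} = u - s)
    {x : ZMod N} (hx : f x = true) :
    gapEq N m f x ∨ gapEq N (m - 1) f x := by
  set T : Set (ZMod N) := {y | f y = true} with hT
  set A : Set (ZMod N) := {y | gapEq N m f y} with hA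
  set B : Set (ZMod N) := {y | gapEq N (m - 1) f y} with hB
  have hAT : A ⊆ T := fun y hy => hy.1
  have hBT : B ⊆ T := fun y hy => hy.1
  have hdisj : Disjoint A B := Set.disjoint_left.mpr fun y hyA hyB => gap_disjoint hm hyA hyB
  have hTc : T.ncard = u := by rw [← Nat.card_coe_set_eq]; exact h1
  have hAc : A.ncard = s := by rw [← Nat.card_coe_set_eq]; exact h2
  have hBc : B.ncard = u - s := by rw [← Nat.card_coe_set_eq]; exact h3
  have hunion : (A ∪ B).ncard = u := by
    rw [Set.ncard_union_eq hdisj (Set.toFinite _) (Set.toFinite _), hAc, hBc]; omega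
  have heq : A ∪ B = T := by
    apply Set.eq_of_subset_of_ncard_le (Set.union_subset hAT hBT) (by rw [hTc, hunion])
  have : x ∈ A ∪ B := heq.symm ▸ (hx : x ∈ T)
  exact this

lemma gap_wstep [NeZero (m * u + s)] (hm : 1 ≤ m) (hsu : s ≤ u)
    (h1 : Nat.card {x : ZMod N // f x = true} = u)
    (h2 : Nat.card {x : ZMod N // gapEq N m f x} = s)
    (h3 : Nat.card {x : ZMod N // gapEq N (m - 1) f x} = u - s)
    {x : ZMod N} (hx : f x = true) :
    gapEq N (wstep N m f x - 1) f x := by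
  by_cases h : gapEq N m f x
  · have : wstep N m f x - 1 = m := by simp [wstep, h]
    rwa [this]
  · have hg := (valid_gap_total hm hsu h1 h2 h3 hx).resolve_left h
    have : wstep N m f x - 1 = m - 1 := by simp [wstep, h]
    rwa [this]

lemma next_true [NeZero (m * u + s)] (hm : 1 ≤ m) (hsu : s ≤ u)
    (h1 : Nat.card {x : ZMod N // f x = true} = u)
    (h2 : Nat.card {x : ZMod N // gapEq N m f x} = s)
    (h3 : Nat.card {x : ZMod N // gapEq N (m - 1) f x} = u - s)
    {x : ZMod N} (hx : f x = true) :
    f (x + ((wstep N m f x : ℕ) : ZMod N)) = true := by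
  have hg := (gap_wstep hm hsu h1 h2 h3 hx).2.2
  have hws : wstep N m f x - 1 + 1 = wstep N m f x := by
    have := wstep_ge (m := m) f x; omega
  rwa [hws] at hg

lemma next_inj [NeZero (m * u + s)] (hm : 1 ≤ m) (hsu : s ≤ u)
    (h1 : Nat.card {x : ZMod N // f x = true} = u)
    (h2 : Nat.card {x : ZMod N // gapEq N m f x} = s)
    (h3 : Nat.card {x : ZMod N // gapEq N (m - 1) f x} = u - s)
    {x y : ZMod N} (hx : f x = true) (hy : f y = true)
    (h : x + ((wstep N m f x : ℕ) : ZMod N) = y + ((wstep N m f y : ℕ) : ZMod N)) :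
    x = y := by
  have key : ∀ a b : ZMod N, f a = true → f b = true →
      wstep N m f a = m + 1 → wstep N m f b = m →
      a + ((wstep N m f a : ℕ) : ZMod N) = b + ((wstep N m f b : ℕ) : ZMod N) → False := by
    intro a b ha hb hwa hwb hab
    rw [hwa, hwb] at hab
    push_cast at hab
    have hba : b = a + 1 := by
      have : (a + 1) + (m : ZMod N) = b + (m : ZMod N) := by
        rw [← hab]; ring
      have := add_right_cancel this
      exact this.symm
    have hfalse : f (a + ((1 : ℕ) : ZMod N)) = false := by
      apply (gap_wstep hm hsu h1 h2 h3 ha).2.1 1 le_rfl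
      rw [hwa]; omega
    rw [show ((1:ℕ) : ZMod N) = 1 by push_cast; ring] at hfalse
    rw [← hba] at hfalse
    rw [hb] at hfalse
    simp at hfalse
  rcases wstep_eq_or (m := m) f x with hwx | hwx <;>
    rcases wstep_eq_or (m := m) f y with hwy | hwy
  · rw [hwx, hwy] at h; exact add_right_cancel h
  · exact absurd (key y x hy hx hwy hwx h.symm) (by simp)
  · exact absurd (key x y hx hy hwx hwy h) (by simp)
  · rw [hwx, hwy] at h; exact add_right_cancel h

variable [NeZero (m * u + s)] {x₀ : ZMod (m * u + s)}

lemma wpos_true (hm : 1 ≤ m) (hsu : s ≤ u)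
    (h1 : Nat.card {x : ZMod N // f x = true} = u)
    (h2 : Nat.card {x : ZMod N // gapEq N m f x} = s)
    (h3 : Nat.card {x : ZMod N // gapEq N (m - 1) f x} = u - s)
    (hx₀ : f x₀ = true) : ∀ i, f (wpos N m f x₀ i) = true := by
  intro i
  induction i with
  | zero => exact hx₀
  | succ i ih => exact next_true hm hsu h1 h2 h3 ih

lemma wpos_back (hm : 1 ≤ m) (hsu : s ≤ u)
    (h1 : Nat.card {x : ZMod N // f x = true} = u)
    (h2 : Nat.card {x : ZMod N // gapEq N m f x} = s)
    (h3 : Nat.card {x : ZMod N // gapEq N (m - 1) f x} = u - s)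
    (hx₀ : f x₀ = true) :
    ∀ d i j, wpos N m f x₀ (i + d) = wpos N m f x₀ (j + d) → wpos N m f x₀ i = wpos N m f x₀ j := by
  intro d
  induction d with
  | zero => intro i j h; simpa using h
  | succ d ih =>
    intro i j h
    rw [show i + (d + 1) = (i + d) + 1 by omega, show j + (d + 1) = (j + d) + 1 by omega] at h
    exact ih i j (next_inj hm hsu h1 h2 h3
      (wpos_true hm hsu h1 h2 h3 hx₀ _) (wpos_true hm hsu h1 h2 h3 hx₀ _) h)

lemma wpos_sum (x₀ : ZMod N) :
    ∀ i, wpos N m f x₀ i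
      = x₀ + ((∑ j ∈ Finset.range i, wstep N m f (wpos N m f x₀ j) : ℕ) : ZMod N) := by
  intro i
  induction i with
  | zero => simp [wpos]
  | succ i ih =>
    rw [Finset.sum_range_succ]
    push_cast
    show wpos N m f x₀ i + _ = _
    rw [ih]
    push_cast
    ring

lemma exists_return (hm : 1 ≤ m) (hsu : s ≤ u)
    (h1 : Nat.card {x : ZMod N // f x = true} = u)
    (h2 : Nat.card {x : ZMod N // gapEq N m f x} = s)
    (h3 : Nat.card {x : ZMod N // gapEq N (m - 1) f x} = u - s)
    (hx₀ : f x₀ = true) :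
    ∃ k, 0 < k ∧ k ≤ u ∧ wpos N m f x₀ k = x₀ := by
  classical
  letI := Fintype.ofFinite {x : ZMod N // f x = true}
  have hcard : Fintype.card {x : ZMod N // f x = true} = u := by
    rw [← Nat.card_eq_fintype_card, h1]
  have hlt : Fintype.card {x : ZMod N // f x = true} < Fintype.card (Fin (u + 1)) := by
    simp [hcard]
  obtain ⟨i, j, hne, hij⟩ := Fintype.exists_ne_map_eq_of_card_lt
    (fun i : Fin (u + 1) => (⟨wpos N m f x₀ i, wpos_true hm hsu h1 h2 h3 hx₀ i⟩ :
      {x : ZMod N // f x = true})) hlt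
  have hij' : wpos N m f x₀ i = wpos N m f x₀ j := congrArg Subtype.val hij
  have key : ∀ a b : ℕ, a < b → b ≤ u → wpos N m f x₀ a = wpos N m f x₀ b →
      ∃ k, 0 < k ∧ k ≤ u ∧ wpos N m f x₀ k = x₀ := by
    intro a b hab hbu heq
    refine ⟨b - a, by omega, by omega, ?_⟩
    have := wpos_back hm hsu h1 h2 h3 hx₀ a 0 (b - a) ?_
    · exact this.symm
    · rw [zero_add, show b - a + a = b by omega]; exact heq
  rcases Ne.lt_or_gt hne with h | h
  · exact key i j (by exact_mod_cast h) (by omega) hij'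
  · exact key j i (by exact_mod_cast h) (by omega) hij'.symm

lemma walk_complete (hm : 1 ≤ m) (hs1 : 1 ≤ s) (hsu : s ≤ u)
    (h1 : Nat.card {x : ZMod N // f x = true} = u)
    (h2 : Nat.card {x : ZMod N // gapEq N m f x} = s)
    (h3 : Nat.card {x : ZMod N // gapEq N (m - 1) f x} = u - s)
    (hx₀ : f x₀ = true) :
    (∀ i j, i < u → j < u → wpos N m f x₀ i = wpos N m f x₀ j → i = j) ∧
    wpos N m f x₀ u = x₀ ∧
    (∀ y, f y = true → ∃ i, i < u ∧ y = wpos N m f x₀ i) ∧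
    ((Finset.range u).filter (fun i => gapEq N m f (wpos N m f x₀ i))).card = s := by
  classical
  obtain ⟨k, hk0, hku, hkret⟩ := exists_return hm hsu h1 h2 h3 hx₀
  have hP : ∃ k, 0 < k ∧ wpos N m f x₀ k = x₀ := ⟨k, hk0, hkret⟩
  obtain ⟨k₀, ⟨hk₀0, hk₀ret⟩, hk₀min⟩ :
      ∃ k₀, (0 < k₀ ∧ wpos N m f x₀ k₀ = x₀) ∧
        ∀ j, j < k₀ → ¬(0 < j ∧ wpos N m f x₀ j = x₀) :=
    ⟨Nat.find hP, Nat.find_spec hP, fun j hj => Nat.find_min hP hj⟩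
  have hk₀le : k₀ ≤ k := by
    by_contra hcon
    exact hk₀min k (by omega) ⟨hk0, hkret⟩
  have hk₀u : k₀ ≤ u := le_trans hk₀le hku
  -- injectivity below k₀
  have hinj : ∀ i j, i < k₀ → j < k₀ → wpos N m f x₀ i = wpos N m f x₀ j → i = j := by
    have key : ∀ i j, i < j → j < k₀ → wpos N m f x₀ i = wpos N m f x₀ j → False := by
      intro i j hij hj heq
      have hb : wpos N m f x₀ 0 = wpos N m f x₀ (j - i) := by
        apply wpos_back hm hsu h1 h2 h3 hx₀ i
        rw [zero_add, show j - i + i = j by omega]; exact heq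
      have : 0 < j - i ∧ wpos N m f x₀ (j - i) = x₀ := ⟨by omega, by rw [← hb]; rfl⟩
      exact hk₀min (j - i) (by omega) this
    intro i j hi hj heq
    rcases lt_trichotomy i j with h | h | h
    · exact absurd (key i j h hj heq) not_false
    · exact h
    · exact absurd (key j i h hi heq.symm) not_false
  -- total step sum
  have hNdvd : (N : ℕ) ∣ ∑ j ∈ Finset.range k₀, wstep N m f (wpos N m f x₀ j) := by
    have hsum := wpos_sum (f := f) x₀ k₀
    rw [hk₀ret] at hsum
    have hz := add_eq_left.mp hsum.symm
    exact (ZMod.natCast_eq_zero_iff _ _).mp hz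
  set Ntot := ∑ j ∈ Finset.range k₀, wstep N m f (wpos N m f x₀ j) with hNtotdef
  have hlow : k₀ * m ≤ Ntot := by
    calc k₀ * m = ∑ _j ∈ Finset.range k₀, m := by rw [Finset.sum_const, Finset.card_range]; ring
    _ ≤ Ntot := Finset.sum_le_sum fun j _ => wstep_ge f _
  have hhigh : Ntot ≤ k₀ * (m + 1) := by
    calc Ntot ≤ ∑ _j ∈ Finset.range k₀, (m + 1) := Finset.sum_le_sum fun j _ => wstep_le f _
    _ = k₀ * (m + 1) := by rw [Finset.sum_const, Finset.card_range]; ring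
  set a := ((Finset.range k₀).filter (fun i => gapEq N m f (wpos N m f x₀ i))).card with hadef
  have hNtot_eq : Ntot = k₀ * m + a := by
    rw [hNtotdef, hadef]
    unfold wstep
    rw [Finset.sum_add_distrib, Finset.sum_const, Finset.card_range, smul_eq_mul]
    congr 1
    exact (Finset.card_filter _ _).symm
  have ha_le : a ≤ s := by
    have himg : (((Finset.range k₀).filter
        (fun i => gapEq N m f (wpos N m f x₀ i))).image (wpos N m f x₀)).card = a := by
      apply Finset.card_image_of_injOn
      intro i hi j hj heq
      exact hinj i j (Finset.mem_range.mp (Finset.mem_filter.mp hi).1)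
        (Finset.mem_range.mp (Finset.mem_filter.mp hj).1) heq
    have hsub : ↑(((Finset.range k₀).filter
        (fun i => gapEq N m f (wpos N m f x₀ i))).image (wpos N m f x₀))
        ⊆ {y : ZMod N | gapEq N m f y} := by
      intro y hy
      simp only [Finset.coe_image, Set.mem_image, Finset.mem_coe, Finset.mem_filter] at hy
      obtain ⟨i, ⟨_, hgap⟩, rfl⟩ := hy
      exact hgap
    have := Set.ncard_le_ncard hsub (Set.toFinite _)
    rw [Set.ncard_coe_finset, himg, ← Nat.card_coe_set_eq] at this
    exact this.trans (le_of_eq h2)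
  have hNtotN : Ntot = N := by
    obtain ⟨c, hc⟩ := hNdvd
    have h2N : Ntot < 2 * (m * u + s) := by
      have hA : k₀ * (m + 1) ≤ u * (m + 1) := Nat.mul_le_mul_right _ hk₀u
      have hB : u * (m + 1) = u * m + u := by ring
      have hC : u * m = m * u := Nat.mul_comm u m
      have hD : u ≤ m * u := Nat.le_mul_of_pos_left u (by omega)
      omega
    have h0 : 0 < Ntot := by
      have := Nat.mul_pos hk₀0 (show 0 < m by omega)
      omega
    rcases c with _ | _ | c
    · omega
    · omega
    · exfalso
      have : (m * u + s) * 2 ≤ (m * u + s) * (c + 1 + 1) :=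
        Nat.mul_le_mul_left _ (by omega)
      omega
  have h₁ : k₀ * m + a = m * u + s := by omega
  have hm1 : k₀ * m ≤ u * m := Nat.mul_le_mul_right _ hk₀u
  have hC : u * m = m * u := Nat.mul_comm u m
  have haeq : a = s := by omega
  have hk₀equ : k₀ = u := by
    have : k₀ * m = u * m := by omega
    exact Nat.eq_of_mul_eq_mul_right (by omega) this
  refine ⟨?_, ?_, ?_, ?_⟩
  · intro i j hi hj heq
    exact hinj i j (by omega) (by omega) heq
  · have hr := hk₀ret; rw [hk₀equ] at hr; exact hr
  -- coverage
  swap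
  · have h4 := haeq
    rw [hadef] at h4
    rw [hk₀equ] at h4
    exact h4
  intro y hy
  have himg : ((Finset.range k₀).image (wpos N m f x₀)).card = k₀ := by
    rw [Finset.card_image_of_injOn, Finset.card_range]
    intro i hi j hj heq
    exact hinj i j (Finset.mem_range.mp hi) (Finset.mem_range.mp hj) heq
  have hsub : ↑((Finset.range k₀).image (wpos N m f x₀)) ⊆ {y : ZMod N | f y = true} := by
    intro z hz
    simp only [Finset.coe_image, Set.mem_image, Finset.mem_coe] at hz
    obtain ⟨i, _, rfl⟩ := hz
    exact wpos_true hm hsu h1 h2 h3 hx₀ i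
  have h1' : Nat.card ↑{y : ZMod N | f y = true} = u := h1
  have heqset : ↑((Finset.range k₀).image (wpos N m f x₀)) = {y : ZMod N | f y = true} := by
    apply Set.eq_of_subset_of_ncard_le hsub
    rw [Set.ncard_coe_finset, himg, ← Nat.card_coe_set_eq, h1']
    omega
  have : y ∈ ({y : ZMod N | f y = true} : Set (ZMod N)) := hy
  rw [← heqset] at this
  simp only [Finset.coe_image, Set.mem_image, Finset.mem_coe, Finset.mem_range] at this
  obtain ⟨i, hi, rfl⟩ := this
  exact ⟨i, by omega, rfl⟩

end Walk




def wordStep (u m : ℕ) (S : Finset (Fin u)) (j : ℕ) : ℕ :=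
  if h : j < u then (if ⟨j, h⟩ ∈ S then m + 1 else m) else 0

def wordSum (u m : ℕ) (S : Finset (Fin u)) (i : ℕ) : ℕ :=
  ∑ j ∈ Finset.range i, wordStep u m S j

noncomputable def wordFun (u s m : ℕ) (S : Finset (Fin u)) (x : ZMod (m * u + s)) :
    ZMod (m * u + s) → Bool :=
  fun y => decide (∃ i, i < u ∧ y = x + ((wordSum u m S i : ℕ) : ZMod (m * u + s)))

section Word

variable {u s m : ℕ} {S : Finset (Fin u)} {x : ZMod (m * u + s)}

local notation "NN" => m * u + s

lemma wordStep_ge {j : ℕ} (hj : j < u) : m ≤ wordStep u m S j := by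
  rw [wordStep, dif_pos hj]
  split <;> omega

lemma wordStep_le {j : ℕ} (hj : j < u) : wordStep u m S j ≤ m + 1 := by
  rw [wordStep, dif_pos hj]
  split <;> omega

lemma wordStep_mem {j : ℕ} (hj : j < u) :
    (wordStep u m S j = m + 1 ↔ (⟨j, hj⟩ : Fin u) ∈ S)
      ∧ ((⟨j, hj⟩ : Fin u) ∉ S → wordStep u m S j = m) := by
  rw [wordStep, dif_pos hj]
  by_cases h : (⟨j, hj⟩ : Fin u) ∈ S <;> simp [h]

lemma wordSum_succ (i : ℕ) : wordSum u m S (i + 1) = wordSum u m S i + wordStep u m S i :=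
  Finset.sum_range_succ _ _

lemma wordSum_lt (hm : 1 ≤ m) {i j : ℕ} (hij : i < j) (hju : j ≤ u) :
    wordSum u m S i < wordSum u m S j := by
  induction j with
  | zero => omega
  | succ j ih =>
    rw [wordSum_succ]
    have hs := wordStep_ge (S := S) (m := m) (show j < u by omega)
    rcases Nat.lt_or_ge i j with h | h
    · have := ih h (by omega); omega
    · have : i = j := by omega
      subst this; omega

lemma wordSum_le {i j : ℕ} (hij : i ≤ j) : wordSum u m S i ≤ wordSum u m S j :=
  Finset.sum_le_sum_of_subset (Finset.range_subset_range.mpr hij)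

lemma wordSum_top (hcard : S.card = s) : wordSum u m S u = m * u + s := by
  have h1 : wordSum u m S u = ∑ i : Fin u, wordStep u m S i := by
    rw [wordSum, ← Fin.sum_univ_eq_sum_range]
  have h2 : ∀ i : Fin u, wordStep u m S i = if i ∈ S then m + 1 else m := by
    intro i
    rw [wordStep, dif_pos i.isLt]
  have h3 : ∑ i : Fin u, wordStep u m S i = ∑ i : Fin u, (m + if i ∈ S then 1 else 0) := by
    apply Finset.sum_congr rfl
    intro i _
    rw [h2]
    split <;> omega
  rw [h1, h3, Finset.sum_add_distrib, Finset.sum_const, Finset.card_univ, Fintype.card_fin,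
    smul_eq_mul]
  have h4 : (∑ i : Fin u, if i ∈ S then 1 else 0) = S.card := by
    rw [← Finset.sum_filter, Finset.filter_univ_mem, Finset.sum_const, smul_eq_mul, mul_one]
  rw [h4, hcard]
  have := Nat.mul_comm u m
  omega

variable [NeZero (m * u + s)]

lemma wordSum_lt_N (hm : 1 ≤ m) (hcard : S.card = s) {i : ℕ} (hi : i < u) :
    wordSum u m S i < m * u + s := by
  have := wordSum_lt (S := S) hm hi le_rfl
  rwa [wordSum_top hcard] at this

lemma wordSum_cast_inj (hm : 1 ≤ m) (hcard : S.card = s) {i j : ℕ} (hi : i < u) (hj : j < u)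
    (h : ((wordSum u m S i : ℕ) : ZMod (m * u + s)) = ((wordSum u m S j : ℕ) : ZMod (m * u + s))) :
    i = j := by
  have h1 := ZMod.val_cast_of_lt (wordSum_lt_N (S := S) hm hcard hi)
  have h2 := ZMod.val_cast_of_lt (wordSum_lt_N (S := S) hm hcard hj)
  have heq : wordSum u m S i = wordSum u m S j := by rw [← h1, ← h2, h]
  rcases lt_trichotomy i j with hc | hc | hc
  · have := wordSum_lt (S := S) hm hc (by omega); omega
  · exact hc
  · have := wordSum_lt (S := S) hm hc (by omega); omega

lemma wordFun_true_iff {y : ZMod (m * u + s)} :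
    wordFun u s m S x y = true
      ↔ ∃ i, i < u ∧ y = x + ((wordSum u m S i : ℕ) : ZMod (m * u + s)) := by
  simp [wordFun]

lemma wordFun_gap (hm : 1 ≤ m) (hcard : S.card = s) {i : ℕ} (hi : i < u) :
    gapEq (m * u + s) (wordStep u m S i - 1) (wordFun u s m S x)
      (x + ((wordSum u m S i : ℕ) : ZMod (m * u + s))) := by
  have hstep_ge := wordStep_ge (S := S) (m := m) hi
  have hstep1 : 1 ≤ wordStep u m S i := le_trans hm hstep_ge
  refine ⟨?_, ?_, ?_⟩
  · rw [wordFun_true_iff]; exact ⟨i, hi, rfl⟩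
  · intro j hj1 hj2
    have hnot : ¬ ∃ l, l < u ∧ x + ((wordSum u m S i : ℕ) : ZMod (m * u + s)) + (j : ZMod (m * u + s))
        = x + ((wordSum u m S l : ℕ) : ZMod (m * u + s)) := by
      rintro ⟨l, hl, heq⟩
      have hcast : ((wordSum u m S i + j : ℕ) : ZMod (m * u + s))
          = ((wordSum u m S l : ℕ) : ZMod (m * u + s)) := by
        push_cast
        rw [add_assoc] at heq
        exact add_left_cancel heq
      have hlt1 : wordSum u m S i + j < m * u + s := by
        have hsucc := wordSum_succ (S := S) (m := m) i
        have h1 : wordSum u m S (i + 1) ≤ wordSum u m S u := wordSum_le (by omega)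
        rw [wordSum_top hcard] at h1
        omega
      have hlt2 : wordSum u m S l < m * u + s := wordSum_lt_N (S := S) hm hcard hl
      have hv1 := ZMod.val_cast_of_lt hlt1
      have hv2 := ZMod.val_cast_of_lt hlt2
      have heqn : wordSum u m S i + j = wordSum u m S l := by rw [← hv1, ← hv2, hcast]
      rcases Nat.lt_or_ge i l with hc | hc
      · have h1 : wordSum u m S (i + 1) ≤ wordSum u m S l := wordSum_le (by omega)
        have hsucc := wordSum_succ (S := S) (m := m) i
        omega
      · have h1 : wordSum u m S l ≤ wordSum u m S i := wordSum_le (by omega)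
        omega
    simpa [wordFun] using hnot
  · have hrw : wordStep u m S i - 1 + 1 = wordStep u m S i := by omega
    rw [hrw, wordFun_true_iff]
    rcases Nat.lt_or_ge (i + 1) u with hiu | hiu
    · refine ⟨i + 1, hiu, ?_⟩
      rw [wordSum_succ]
      push_cast
      ring
    · have hieq : i + 1 = u := by omega
      refine ⟨0, by omega, ?_⟩
      have hz : ((wordSum u m S u : ℕ) : ZMod (m * u + s)) = 0 := by
        rw [wordSum_top hcard]; exact ZMod.natCast_self _
      have h0 : wordSum u m S 0 = 0 := by simp [wordSum]
      rw [h0]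
      have : x + ((wordSum u m S i : ℕ) : ZMod (m * u + s))
          + ((wordStep u m S i : ℕ) : ZMod (m * u + s))
          = x + ((wordSum u m S (i + 1) : ℕ) : ZMod (m * u + s)) := by
        rw [wordSum_succ]; push_cast; ring
      rw [this, hieq, hz]
      simp

lemma wordFun_gap_m_iff (hm : 1 ≤ m) (hcard : S.card = s) {y : ZMod (m * u + s)} :
    gapEq (m * u + s) m (wordFun u s m S x) y
      ↔ ∃ i : Fin u, i ∈ S ∧ y = x + ((wordSum u m S i : ℕ) : ZMod (m * u + s)) := by
  constructor
  · intro hg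
    obtain ⟨i, hi, rfl⟩ := wordFun_true_iff.mp hg.1
    refine ⟨⟨i, hi⟩, ?_, rfl⟩
    by_contra hns
    have hstep := (wordStep_mem (m := m) hi).2 hns
    have hgap := wordFun_gap (S := S) (x := x) hm hcard hi
    rw [hstep] at hgap
    exact gap_disjoint hm hg hgap
  · rintro ⟨i, hiS, rfl⟩
    have hstep : wordStep u m S i = m + 1 := by
      apply (wordStep_mem (m := m) i.isLt).1.mpr
      simpa using hiS
    have hgap := wordFun_gap (S := S) (x := x) hm hcard i.isLt
    rw [hstep] at hgap
    simpa using hgap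

lemma wordFun_gap_m1_iff (hm : 1 ≤ m) (hcard : S.card = s) {y : ZMod (m * u + s)} :
    gapEq (m * u + s) (m - 1) (wordFun u s m S x) y
      ↔ ∃ i : Fin u, i ∉ S ∧ y = x + ((wordSum u m S i : ℕ) : ZMod (m * u + s)) := by
  constructor
  · intro hg
    obtain ⟨i, hi, rfl⟩ := wordFun_true_iff.mp hg.1
    refine ⟨⟨i, hi⟩, ?_, rfl⟩
    intro hiS
    have hstep : wordStep u m S i = m + 1 := by
      apply (wordStep_mem (m := m) hi).1.mpr
      simpa using hiS
    have hgap := wordFun_gap (S := S) (x := x) hm hcard hi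
    rw [hstep] at hgap
    simp only [Nat.add_sub_cancel] at hgap
    exact gap_disjoint hm hgap hg
  · rintro ⟨i, hiS, rfl⟩
    have hstep : wordStep u m S i = m := by
      apply (wordStep_mem (m := m) i.isLt).2
      simpa using hiS
    have hgap := wordFun_gap (S := S) (x := x) hm hcard i.isLt
    rw [hstep] at hgap
    exact hgap

lemma card_pred_eq {α : Type*} [Finite α] {β : Type*} [Fintype β] (P : β → α)
    (hP : Function.Injective P) (Q : Finset β) (pred : α → Prop)
    (h : ∀ y, pred y ↔ ∃ i ∈ Q, y = P i) : Nat.card {y : α // pred y} = Q.card := by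
  have hset : {y : α | pred y} = ↑(Q.image P) := by
    ext y
    simp only [Set.mem_setOf_eq, Finset.coe_image, Set.mem_image, Finset.mem_coe, h]
    constructor
    · rintro ⟨i, hi, rfl⟩; exact ⟨i, hi, rfl⟩
    · rintro ⟨i, hi, rfl⟩; exact ⟨i, hi, rfl⟩
  have : Nat.card {y : α // pred y} = ({y : α | pred y} : Set α).ncard :=
    Nat.card_coe_set_eq _
  rw [this, hset, Set.ncard_coe_finset]
  exact Finset.card_image_of_injective _ hP

lemma wordFun_valid (hm : 1 ≤ m) (hs1 : 1 ≤ s) (hsu : s ≤ u) (hcard : S.card = s) :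
    Nat.card {y : ZMod (m * u + s) // wordFun u s m S x y = true} = u ∧
    Nat.card {y : ZMod (m * u + s) // gapEq (m * u + s) m (wordFun u s m S x) y} = s ∧
    Nat.card {y : ZMod (m * u + s) // gapEq (m * u + s) (m - 1) (wordFun u s m S x) y} = u - s
    := by
  have hPinj : Function.Injective
      (fun i : Fin u => x + ((wordSum u m S i : ℕ) : ZMod (m * u + s))) := by
    intro i j hij
    simp only at hij
    have := add_left_cancel hij
    exact Fin.ext (wordSum_cast_inj (S := S) hm hcard i.isLt j.isLt this)
  refine ⟨?_, ?_, ?_⟩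
  · have := card_pred_eq _ hPinj Finset.univ
      (fun y => wordFun u s m S x y = true) ?_
    · rw [this, Finset.card_univ, Fintype.card_fin]
    · intro y
      show wordFun u s m S x y = true ↔ _
      rw [wordFun_true_iff]
      constructor
      · rintro ⟨i, hi, rfl⟩; exact ⟨⟨i, hi⟩, Finset.mem_univ _, rfl⟩
      · rintro ⟨i, _, rfl⟩; exact ⟨i, i.isLt, rfl⟩
  · have := card_pred_eq _ hPinj S
      (fun y => gapEq (m * u + s) m (wordFun u s m S x) y) ?_
    · rw [this, hcard]
    · intro y
      show gapEq (m * u + s) m (wordFun u s m S x) y ↔ _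
      rw [wordFun_gap_m_iff (S := S) hm hcard]
  · have := card_pred_eq _ hPinj Sᶜ
      (fun y => gapEq (m * u + s) (m - 1) (wordFun u s m S x) y) ?_
    · rw [this, Finset.card_compl, hcard, Fintype.card_fin]
    · intro y
      show gapEq (m * u + s) (m - 1) (wordFun u s m S x) y ↔ _
      rw [wordFun_gap_m1_iff (S := S) hm hcard]
      constructor
      · rintro ⟨i, hi, rfl⟩; exact ⟨i, Finset.mem_compl.mpr hi, rfl⟩
      · rintro ⟨i, hi, rfl⟩; exact ⟨i, Finset.mem_compl.mp hi, rfl⟩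

lemma wordFun_base (hu : 1 ≤ u) : wordFun u s m S x x = true := by
  rw [wordFun_true_iff]
  refine ⟨0, by omega, ?_⟩
  simp [wordSum]

end Word



section Bridge

variable {u s m : ℕ} {S : Finset (Fin u)} {x : ZMod (m * u + s)} [NeZero (m * u + s)]

/-- The walk of `wordFun S x` starting at `x` follows the prescribed partial sums. -/
lemma word_walk (hm : 1 ≤ m) (hcard : S.card = s) :
    ∀ i, i ≤ u → wpos (m * u + s) m (wordFun u s m S x) x i
      = x + ((wordSum u m S i : ℕ) : ZMod (m * u + s)) := by
  intro i
  induction i with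
  | zero => intro _; simp [wpos, wordSum]
  | succ i ih =>
    intro hi
    have hiu : i < u := by omega
    have hpos := ih (by omega)
    show wpos (m * u + s) m (wordFun u s m S x) x i
        + ((wstep (m * u + s) m (wordFun u s m S x)
            (wpos (m * u + s) m (wordFun u s m S x) x i) : ℕ) : ZMod (m * u + s)) = _
    rw [hpos]
    have hstep : wstep (m * u + s) m (wordFun u s m S x)
        (x + ((wordSum u m S i : ℕ) : ZMod (m * u + s))) = wordStep u m S i := by
      by_cases hg : gapEq (m * u + s) m (wordFun u s m S x)
          (x + ((wordSum u m S i : ℕ) : ZMod (m * u + s)))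
      · have hmem : (⟨i, hiu⟩ : Fin u) ∈ S := by
          obtain ⟨l, hl, heq⟩ := (wordFun_gap_m_iff (S := S) hm hcard).mp hg
          have h2 := add_left_cancel heq
          have h3 := wordSum_cast_inj (S := S) hm hcard hiu l.isLt h2
          have : (⟨i, hiu⟩ : Fin u) = l := Fin.ext h3
          rw [this]; exact hl
        rw [show wstep (m * u + s) m (wordFun u s m S x)
            (x + ((wordSum u m S i : ℕ) : ZMod (m * u + s))) = m + 1 by
          unfold wstep; rw [if_pos hg]]
        exact ((wordStep_mem (m := m) hiu).1.mpr hmem).symm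
      · have hmem : (⟨i, hiu⟩ : Fin u) ∉ S := by
          intro hmem
          exact hg ((wordFun_gap_m_iff (S := S) hm hcard).mpr ⟨⟨i, hiu⟩, hmem, rfl⟩)
        rw [show wstep (m * u + s) m (wordFun u s m S x)
            (x + ((wordSum u m S i : ℕ) : ZMod (m * u + s))) = m by
          simp [wstep, hg]]
        exact ((wordStep_mem (m := m) hiu).2 hmem).symm
    rw [hstep, wordSum_succ]
    push_cast
    ring

/-- The subset `S` is recoverable from the function `wordFun S x` and the base point `x`. -/
lemma word_recover (hm : 1 ≤ m) (hcard : S.card = s) :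
    S = Finset.univ.filter (fun i : Fin u => gapEq (m * u + s) m (wordFun u s m S x)
      (wpos (m * u + s) m (wordFun u s m S x) x i)) := by
  ext i
  simp only [Finset.mem_filter, Finset.mem_univ, true_and]
  rw [word_walk (S := S) hm hcard i (le_of_lt i.isLt)]
  rw [wordFun_gap_m_iff (S := S) hm hcard]
  constructor
  · intro hi; exact ⟨i, hi, rfl⟩
  · rintro ⟨l, hl, heq⟩
    have h2 := add_left_cancel heq
    have h3 := wordSum_cast_inj (S := S) hm hcard i.isLt l.isLt h2
    have : i = l := Fin.ext h3
    rw [this]; exact hl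

/-- Every valid colouring with a marked true point arises from a word. -/
lemma walk_repr {f : ZMod (m * u + s) → Bool} (hm : 1 ≤ m) (hs1 : 1 ≤ s) (hsu : s ≤ u)
    (h1 : Nat.card {y : ZMod (m * u + s) // f y = true} = u)
    (h2 : Nat.card {y : ZMod (m * u + s) // gapEq (m * u + s) m f y} = s)
    (h3 : Nat.card {y : ZMod (m * u + s) // gapEq (m * u + s) (m - 1) f y} = u - s)
    (hx : f x = true) :
    ∃ S : Finset (Fin u), S.card = s ∧ f = wordFun u s m S x := by
  obtain ⟨hinj, hret, hcover, hfilt⟩ := walk_complete hm hs1 hsu h1 h2 h3 hx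
  set S₀ : Finset (Fin u) := Finset.univ.filter
    (fun i : Fin u => gapEq (m * u + s) m f (wpos (m * u + s) m f x i)) with hS₀def
  have hS₀card : S₀.card = s := by
    rw [← hfilt]
    apply Finset.card_bij (fun (i : Fin u) _ => (i : ℕ))
    · intro i hi
      rw [Finset.mem_filter]
      rw [hS₀def, Finset.mem_filter] at hi
      exact ⟨Finset.mem_range.mpr i.isLt, hi.2⟩
    · intro i _ j _ hij
      exact Fin.ext hij
    · intro j hj
      rw [Finset.mem_filter, Finset.mem_range] at hj
      refine ⟨⟨j, hj.1⟩, ?_, rfl⟩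
      rw [hS₀def, Finset.mem_filter]
      exact ⟨Finset.mem_univ _, hj.2⟩
  have hmemS₀ : ∀ (j : ℕ) (hj : j < u),
      ((⟨j, hj⟩ : Fin u) ∈ S₀ ↔ gapEq (m * u + s) m f (wpos (m * u + s) m f x j)) := by
    intro j hj
    rw [hS₀def, Finset.mem_filter]
    simp
  have hwalk : ∀ i, i ≤ u → wpos (m * u + s) m f x i
      = x + ((wordSum u m S₀ i : ℕ) : ZMod (m * u + s)) := by
    intro i
    induction i with
    | zero => intro _; simp [wpos, wordSum]
    | succ i ih =>
      intro hi
      have hiu : i < u := by omega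
      have hpos := ih (by omega)
      show wpos (m * u + s) m f x i
          + ((wstep (m * u + s) m f (wpos (m * u + s) m f x i) : ℕ) : ZMod (m * u + s)) = _
      have hstep : wstep (m * u + s) m f (wpos (m * u + s) m f x i) = wordStep u m S₀ i := by
        by_cases hg : gapEq (m * u + s) m f (wpos (m * u + s) m f x i)
        · rw [show wstep (m * u + s) m f (wpos (m * u + s) m f x i) = m + 1 by
            unfold wstep; rw [if_pos hg]]
          exact ((wordStep_mem (m := m) hiu).1.mpr ((hmemS₀ i hiu).mpr hg)).symm
        · rw [show wstep (m * u + s) m f (wpos (m * u + s) m f x i) = m by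
            simp [wstep, hg]]
          exact ((wordStep_mem (m := m) hiu).2
            (fun hmem => hg ((hmemS₀ i hiu).mp hmem))).symm
      rw [hstep, hpos, wordSum_succ]
      push_cast
      ring
  refine ⟨S₀, hS₀card, ?_⟩
  funext y
  have hiff : f y = true ↔ wordFun u s m S₀ x y = true := by
    rw [wordFun_true_iff]
    constructor
    · intro hy
      obtain ⟨i, hi, rfl⟩ := hcover y hy
      exact ⟨i, hi, (hwalk i (le_of_lt hi)).symm ▸ rfl⟩
    · rintro ⟨i, hi, rfl⟩
      rw [← hwalk i (le_of_lt hi)]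
      exact wpos_true hm hsu h1 h2 h3 hx i
  cases hfy : f y with
  | true => exact (hiff.mp hfy).symm
  | false =>
    cases hwy : wordFun u s m S₀ x y with
    | true =>
      have := hiff.mpr hwy
      rw [hfy] at this
      exact this
    | false => rfl

end Bridge

section Translate

variable {u s m : ℕ} [NeZero (m * u + s)]

lemma gapEq_translate {N g : ℕ} {f : ZMod N → Bool} {t y : ZMod N}
    (hg : gapEq N g f y) (ht : ∀ z, f (z + t) = f z) : gapEq N g f (y + t) := by
  obtain ⟨h1, h2, h3⟩ := hg
  refine ⟨?_, ?_, ?_⟩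
  · rw [ht]; exact h1
  · intro j hj1 hj2
    rw [add_right_comm, ht]
    exact h2 j hj1 hj2
  · rw [add_right_comm, ht]
    exact h3

lemma valid_translate {f : ZMod (m * u + s) → Bool} (t : ZMod (m * u + s))
    (hv : Nat.card {x : ZMod (m * u + s) // f x = true} = u ∧
      Nat.card {x : ZMod (m * u + s) // gapEq (m * u + s) m f x} = s ∧
      Nat.card {x : ZMod (m * u + s) // gapEq (m * u + s) (m - 1) f x} = u - s) :
    Nat.card {x : ZMod (m * u + s) // (fun z => f (z + t)) x = true} = u ∧
    Nat.card {x : ZMod (m * u + s) // gapEq (m * u + s) m (fun z => f (z + t)) x} = s ∧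
    Nat.card {x : ZMod (m * u + s) // gapEq (m * u + s) (m - 1) (fun z => f (z + t)) x} = u - s
    := by
  have hgap : ∀ (g : ℕ) (y : ZMod (m * u + s)),
      gapEq (m * u + s) g (fun z => f (z + t)) y ↔ gapEq (m * u + s) g f (y + t) := by
    intro g y
    constructor
    · rintro ⟨h1, h2, h3⟩
      refine ⟨h1, fun j hj1 hj2 => ?_, ?_⟩
      · rw [add_right_comm]; exact h2 j hj1 hj2
      · rw [add_right_comm]; exact h3
    · rintro ⟨h1, h2, h3⟩
      refine ⟨h1, fun j hj1 hj2 => ?_, ?_⟩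
      · show f (y + (j : ZMod (m * u + s)) + t) = false
        rw [add_right_comm]; exact h2 j hj1 hj2
      · show f (y + (((g + 1 : ℕ)) : ZMod (m * u + s)) + t) = true
        rw [add_right_comm]; exact h3
  have e1 : {x : ZMod (m * u + s) // (fun z => f (z + t)) x = true}
      ≃ {x : ZMod (m * u + s) // f x = true} :=
    Equiv.subtypeEquiv (Equiv.addRight t) (fun z => Iff.rfl)
  have e2 : ∀ g : ℕ, {x : ZMod (m * u + s) // gapEq (m * u + s) g (fun z => f (z + t)) x}
      ≃ {x : ZMod (m * u + s) // gapEq (m * u + s) g f x} := fun g =>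
    Equiv.subtypeEquiv (Equiv.addRight t) (fun z => by
      rw [hgap g z]; exact Iff.rfl)
  exact ⟨by rw [Nat.card_congr e1, hv.1], by rw [Nat.card_congr (e2 m), hv.2.1],
    by rw [Nat.card_congr (e2 (m - 1)), hv.2.2]⟩

lemma free_translation (hm : 1 ≤ m) (hs1 : 1 ≤ s) (hcop : Nat.Coprime u s)
    {f : ZMod (m * u + s) → Bool} {t : ZMod (m * u + s)}
    (h1 : Nat.card {x : ZMod (m * u + s) // f x = true} = u)
    (h2 : Nat.card {x : ZMod (m * u + s) // gapEq (m * u + s) m f x} = s)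
    (ht : ∀ z, f (z + t) = f z) : t = 0 := by
  have d1 : addOrderOf t ∣ u := by
    have hinv : ∀ z ∈ {z : ZMod (m * u + s) | f z = true}, z + t ∈
        {z : ZMod (m * u + s) | f z = true} := by
      intro z hz
      show f (z + t) = true
      rw [ht]; exact hz
    have := addOrderOf_dvd_card_of_invariant t hinv
    rwa [show Nat.card {z : ZMod (m * u + s) | f z = true} = u from h1] at this
  have d2 : addOrderOf t ∣ s := by
    have hinv : ∀ z ∈ {z : ZMod (m * u + s) | gapEq (m * u + s) m f z}, z + t ∈
        {z : ZMod (m * u + s) | gapEq (m * u + s) m f z} := by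
      intro z hz
      exact gapEq_translate hz ht
    have := addOrderOf_dvd_card_of_invariant t hinv
    rwa [show Nat.card {z : ZMod (m * u + s) | gapEq (m * u + s) m f z} = s from h2] at this
  have hone : addOrderOf t = 1 := Nat.eq_one_of_dvd_coprimes hcop d1 d2
  exact AddMonoid.addOrderOf_eq_one_iff.mp hone

end Translate

section Final

variable {u s m : ℕ} [NeZero (m * u + s)]

/-- Counting pairs (valid colouring, marked true point) via words. -/
lemma pairs_card_words (hm : 1 ≤ m) (hs1 : 1 ≤ s) (hsu : s ≤ u) (hu1 : 1 ≤ u) :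
    Nat.card {p : (ZMod (m * u + s) → Bool) × ZMod (m * u + s) //
        (Nat.card {x : ZMod (m * u + s) // p.1 x = true} = u ∧
         Nat.card {x : ZMod (m * u + s) // gapEq (m * u + s) m p.1 x} = s ∧
         Nat.card {x : ZMod (m * u + s) // gapEq (m * u + s) (m - 1) p.1 x} = u - s) ∧
        p.1 p.2 = true}
      = (m * u + s) * Nat.choose u s := by
  classical
  let Φ : ZMod (m * u + s) × {S : Finset (Fin u) // S.card = s} →
      {p : (ZMod (m * u + s) → Bool) × ZMod (m * u + s) //
        (Nat.card {x : ZMod (m * u + s) // p.1 x = true} = u ∧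
         Nat.card {x : ZMod (m * u + s) // gapEq (m * u + s) m p.1 x} = s ∧
         Nat.card {x : ZMod (m * u + s) // gapEq (m * u + s) (m - 1) p.1 x} = u - s) ∧
        p.1 p.2 = true} := fun q =>
    ⟨(wordFun u s m q.2.1 q.1, q.1),
      wordFun_valid hm hs1 hsu q.2.2, wordFun_base hu1⟩
  have hbij : Function.Bijective Φ := by
    constructor
    · rintro ⟨x, S, hS⟩ ⟨x', S', hS'⟩ h
      have hpair := congrArg Subtype.val h
      have hx : x = x' := congrArg Prod.snd hpair
      subst hx
      have hfe : wordFun u s m S x = wordFun u s m S' x := congrArg Prod.fst hpair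
      have hSS : S = S' := by
        rw [word_recover (S := S) (x := x) hm hS, word_recover (S := S') (x := x) hm hS', hfe]
      subst hSS
      rfl
    · rintro ⟨⟨f, x⟩, ⟨h1, h2, h3⟩, hbase⟩
      obtain ⟨S, hScard, hf⟩ := walk_repr (x := x) hm hs1 hsu h1 h2 h3 hbase
      refine ⟨(x, ⟨S, hScard⟩), ?_⟩
      apply Subtype.ext
      show (wordFun u s m S x, x) = (f, x)
      rw [← hf]
  rw [← Nat.card_congr (Equiv.ofBijective Φ hbij)]
  rw [Nat.card_prod, Nat.card_zmod]
  congr 1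
  rw [Nat.card_eq_fintype_card, Fintype.card_finset_len, Fintype.card_fin]

/-- Counting pairs as a sigma over valid colourings. -/
lemma pairs_card_sigma :
    Nat.card {p : (ZMod (m * u + s) → Bool) × ZMod (m * u + s) //
        (Nat.card {x : ZMod (m * u + s) // p.1 x = true} = u ∧
         Nat.card {x : ZMod (m * u + s) // gapEq (m * u + s) m p.1 x} = s ∧
         Nat.card {x : ZMod (m * u + s) // gapEq (m * u + s) (m - 1) p.1 x} = u - s) ∧
        p.1 p.2 = true}
      = Nat.card {f : ZMod (m * u + s) → Bool //
          Nat.card {x : ZMod (m * u + s) // f x = true} = u ∧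
          Nat.card {x : ZMod (m * u + s) // gapEq (m * u + s) m f x} = s ∧
          Nat.card {x : ZMod (m * u + s) // gapEq (m * u + s) (m - 1) f x} = u - s} * u := by
  classical
  have e : {p : (ZMod (m * u + s) → Bool) × ZMod (m * u + s) //
        (Nat.card {x : ZMod (m * u + s) // p.1 x = true} = u ∧
         Nat.card {x : ZMod (m * u + s) // gapEq (m * u + s) m p.1 x} = s ∧
         Nat.card {x : ZMod (m * u + s) // gapEq (m * u + s) (m - 1) p.1 x} = u - s) ∧
        p.1 p.2 = true}
      ≃ Σ g : {f : ZMod (m * u + s) → Bool //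
          Nat.card {x : ZMod (m * u + s) // f x = true} = u ∧
          Nat.card {x : ZMod (m * u + s) // gapEq (m * u + s) m f x} = s ∧
          Nat.card {x : ZMod (m * u + s) // gapEq (m * u + s) (m - 1) f x} = u - s},
        {y : ZMod (m * u + s) // g.1 y = true} :=
    { toFun := fun p => ⟨⟨p.1.1, p.2.1⟩, ⟨p.1.2, p.2.2⟩⟩
      invFun := fun t => ⟨(t.1.1, t.2.1), t.1.2, t.2.2⟩
      left_inv := fun p => rfl
      right_inv := fun t => rfl }
  rw [Nat.card_congr e]
  exact card_sigma_const _ u (fun g => g.2.1)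

/-- The rotation action on valid colourings is free: fibers of the quotient map
have cardinality `m * u + s`. -/
lemma valid_card_eq_quot (hm : 1 ≤ m) (hs1 : 1 ≤ s) (hcop : Nat.Coprime u s) :
    Nat.card {f : ZMod (m * u + s) → Bool //
        Nat.card {x : ZMod (m * u + s) // f x = true} = u ∧
        Nat.card {x : ZMod (m * u + s) // gapEq (m * u + s) m f x} = s ∧
        Nat.card {x : ZMod (m * u + s) // gapEq (m * u + s) (m - 1) f x} = u - s}
      = Nat.card (Quotient (Setoid.comap
          (Subtype.val :
            {f : ZMod (m * u + s) → Bool //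
                Nat.card {x : ZMod (m * u + s) // f x = true} = u ∧
                Nat.card {x : ZMod (m * u + s) // gapEq (m * u + s) m f x} = s ∧
                Nat.card {x : ZMod (m * u + s) // gapEq (m * u + s) (m - 1) f x} = u - s}
              → (ZMod (m * u + s) → Bool))
          (rotSetoid (m * u + s)))) * (m * u + s) := by
  classical
  apply card_eq_card_quot_mul
  intro q
  obtain ⟨f₀, rfl⟩ := Quotient.exists_rep q
  set sd := Setoid.comap
      (Subtype.val :
        {f : ZMod (m * u + s) → Bool //
            Nat.card {x : ZMod (m * u + s) // f x = true} = u ∧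
            Nat.card {x : ZMod (m * u + s) // gapEq (m * u + s) m f x} = s ∧
            Nat.card {x : ZMod (m * u + s) // gapEq (m * u + s) (m - 1) f x} = u - s}
          → (ZMod (m * u + s) → Bool))
      (rotSetoid (m * u + s)) with hsd
  let e : ZMod (m * u + s) → {g // Quotient.mk sd g = Quotient.mk sd f₀} := fun t =>
    ⟨⟨fun z => f₀.1 (z + t), valid_translate t f₀.2⟩,
      Quotient.sound (⟨-t, fun x => by rw [neg_add_cancel_right]⟩ :
        ∃ t' : ZMod (m * u + s), ∀ x, f₀.1 x = f₀.1 (x + t' + t))⟩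
  have hinj : Function.Injective e := by
    intro t t' h
    have hfun : (fun z => f₀.1 (z + t)) = (fun z => f₀.1 (z + t')) :=
      congrArg (fun g => g.1.1) h
    have hinvar : ∀ z, f₀.1 (z + (t - t')) = f₀.1 z := by
      intro z
      have h1 := congrFun hfun (z - t')
      rw [sub_add_cancel] at h1
      have hzz : z + (t - t') = z - t' + t := by ring
      rw [hzz, h1]
    have := free_translation hm hs1 hcop f₀.2.1 f₀.2.2.1 hinvar
    have := sub_eq_zero.mp this
    exact this
  have hsurj : Function.Surjective e := by
    rintro ⟨g, hg⟩
    obtain ⟨τ, hτ⟩ := Quotient.exact hg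
    refine ⟨-τ, ?_⟩
    apply Subtype.ext
    apply Subtype.ext
    show (fun z => f₀.1 (z + -τ)) = g.1
    funext z
    have := hτ (z - τ)
    rw [sub_add_cancel] at this
    rw [show z + -τ = z - τ from (sub_eq_add_neg z τ).symm, ← this]
  rw [← Nat.card_eq_of_bijective e ⟨hinj, hsurj⟩, Nat.card_zmod]

end Final

end NecklaceAux

/-- let `u ≥ 2`, `1 ≤ s ≤ u-1` coprime to `u`, `m ≥ 1` and `n = mu + s`.
The number of orbits of the rotation action of `ZMod n` on the set of functions
`f : ZMod n → Bool` with exactly `u` values `true`, exactly `s` cyclic gaps equal to `m`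
and exactly `u - s` cyclic gaps equal to `m - 1`, equals `(1/u) * (u.choose s)`. -/
theorem necklace_count_pyramid (u s m : ℕ) (hu : 2 ≤ u) (hs1 : 1 ≤ s) (hs2 : s ≤ u - 1)
    (hcop : Nat.Coprime u s) (hm : 1 ≤ m) :
    u * Nat.card (Quotient (Setoid.comap
      (Subtype.val :
        {f : ZMod (m * u + s) → Bool //
            Nat.card {x : ZMod (m * u + s) // f x = true} = u ∧
            Nat.card {x : ZMod (m * u + s) // gapEq (m * u + s) m f x} = s ∧
            Nat.card {x : ZMod (m * u + s) // gapEq (m * u + s) (m - 1) f x} = u - s}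
          → (ZMod (m * u + s) → Bool))
      (rotSetoid (m * u + s)))) = Nat.choose u s := by
  classical
  haveI : NeZero (m * u + s) := ⟨by omega⟩
  have hsu : s ≤ u := by omega
  have hu1 : 1 ≤ u := by omega
  have hA := NecklaceAux.pairs_card_words (u := u) (s := s) (m := m) hm hs1 hsu hu1
  have hB := NecklaceAux.pairs_card_sigma (u := u) (s := s) (m := m)
  have hD := NecklaceAux.valid_card_eq_quot (u := u) (s := s) (m := m) hm hs1 hcop
  rw [hD] at hB
  rw [hA] at hB
  have hNpos : 0 < m * u + s := by positivity
  apply Nat.eq_of_mul_eq_mul_left hNpos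
  calc (m * u + s) * (u * Nat.card (Quotient (Setoid.comap
      (Subtype.val :
        {f : ZMod (m * u + s) → Bool //
            Nat.card {x : ZMod (m * u + s) // f x = true} = u ∧
            Nat.card {x : ZMod (m * u + s) // gapEq (m * u + s) m f x} = s ∧
            Nat.card {x : ZMod (m * u + s) // gapEq (m * u + s) (m - 1) f x} = u - s}
          → (ZMod (m * u + s) → Bool))
      (rotSetoid (m * u + s)))))
      = Nat.card (Quotient (Setoid.comap
      (Subtype.val :
        {f : ZMod (m * u + s) → Bool //
            Nat.card {x : ZMod (m * u + s) // f x = true} = u ∧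
            Nat.card {x : ZMod (m * u + s) // gapEq (m * u + s) m f x} = s ∧
            Nat.card {x : ZMod (m * u + s) // gapEq (m * u + s) (m - 1) f x} = u - s}
          → (ZMod (m * u + s) → Bool))
      (rotSetoid (m * u + s)))) * (m * u + s) * u := by ring
    _ = (m * u + s) * Nat.choose u s := hB.symm
end

section
/- Fix integers u ≥ 2, 1 ≤ s ≤ u−1, m ≥ 1, and let P = {(c,k) ∈ ℕ × ℕ : c < u and k < h_c}, where h_c = m+1 if c < s and h_c = m otherwise. For p ∈ P write col(p) and row(p) for its two coordinates. Let W₀ = {σ ∈ Perm(P) : col(σ(p)) = col(p) for all p} (column-preserving permutations) and W^f = {σ ∈ Perm(P) : row(σ(p)) = row(p) for all p} (row-preserving permutations). Then a permutation σ ∈ Perm(P) satisfies 'for all p ≠ q with col(p) = col(q), row(σ(p)) ≠ row(σ(q))' if and only if σ = σ_f ∘ σ₀ for some σ_f ∈ W^f and σ₀ ∈ W₀. -/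
/-- The set of boxes of the left-adjusted pyramid of the partition `[u^m, s]`:
pairs `(c, k)` with `c < u` (the column) and `k < h_c` (the row), where the column height
is `h_c = m + 1` for `c < s` and `h_c = m` otherwise. -/
abbrev PyrBox (u s m : ℕ) := {p : ℕ × ℕ // p.1 < u ∧ p.2 < if p.1 < s then m + 1 else m}

/-- Lemma 4.18: a permutation `σ` of the boxes of the pyramid sends no pair of
distinct boxes in a common column to a pair of boxes in a common row if and only if
`σ = σf ∘ σ₀` with `σf` row-preserving and `σ₀` column-preserving. -/
theorem pyramid_perm_factorisation (u s m : ℕ) (hu : 2 ≤ u) (hs1 : 1 ≤ s) (hs2 : s ≤ u - 1)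
    (hm : 1 ≤ m) (σ : Equiv.Perm (PyrBox u s m)) :
    (∀ p q : PyrBox u s m, p ≠ q → (p : ℕ × ℕ).1 = (q : ℕ × ℕ).1 →
        (σ p : ℕ × ℕ).2 ≠ (σ q : ℕ × ℕ).2) ↔
      ∃ σf σ0 : Equiv.Perm (PyrBox u s m),
        (∀ p, (σf p : ℕ × ℕ).2 = (p : ℕ × ℕ).2) ∧
        (∀ p, (σ0 p : ℕ × ℕ).1 = (p : ℕ × ℕ).1) ∧
        σ = σf * σ0 := by
  have hsu : s < u := by omega
  haveI : Finite (PyrBox u s m) := Finite.of_injective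
    (fun p : PyrBox u s m => ((⟨(p : ℕ × ℕ).1, p.2.1⟩ : Fin u),
      (⟨(p : ℕ × ℕ).2, by
        have := p.2.2; split at this <;> omega⟩ : Fin (m+1))))
    (by
      intro a b hab
      simp only [Prod.ext_iff, Fin.ext_iff] at hab
      exact Subtype.ext (Prod.ext hab.1 hab.2))
  -- every row index is at most m
  have rowlt : ∀ p : PyrBox u s m, (p : ℕ × ℕ).2 < m + 1 := by
    rintro ⟨⟨c, k⟩, hc, hk⟩
    dsimp only at hk ⊢
    split at hk <;> omega
  -- boxes in row m lie in a tall column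
  have colm : ∀ p : PyrBox u s m, (p : ℕ × ℕ).2 = m → (p : ℕ × ℕ).1 < s := by
    rintro ⟨⟨c, k⟩, hc, hk⟩ hkm
    dsimp only at hk hkm ⊢
    split at hk <;> omega
  constructor
  · intro h
    -- each tall column contains a box sent to row m
    have tall : ∀ c : ℕ, c < s → ∃ p : PyrBox u s m,
        (p : ℕ × ℕ).1 = c ∧ (σ p : ℕ × ℕ).2 = m := by
      intro c hc
      have hcu : c < u := by omega
      set B : Fin (m+1) → PyrBox u s m := fun k =>
        ⟨(c, (k : ℕ)), hcu, by simp only [if_pos hc]; exact k.isLt⟩ with hB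
      set φ : Fin (m+1) → Fin (m+1) := fun k =>
        ⟨(σ (B k) : ℕ × ℕ).2, rowlt _⟩ with hφ
      have hinj : Function.Injective φ := by
        intro k1 k2 hk
        by_contra hne
        have hBne : B k1 ≠ B k2 := by
          intro hBe
          apply hne
          have := congrArg (fun p : PyrBox u s m => (p : ℕ × ℕ).2) hBe
          exact Fin.ext this
        exact h (B k1) (B k2) hBne rfl (by
          have := congrArg Fin.val hk
          exact this)
      have hsurj : Function.Surjective φ := Finite.injective_iff_surjective.mp hinj
      obtain ⟨k, hk⟩ := hsurj ⟨m, Nat.lt_succ_self m⟩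
      exact ⟨B k, rfl, congrArg Fin.val hk⟩
    choose pc hpc1 hpc2 using tall
    -- key fact: row (σ p) < h_(col p)
    have key : ∀ p : PyrBox u s m,
        (σ p : ℕ × ℕ).2 < if (p : ℕ × ℕ).1 < s then m + 1 else m := by
      intro p
      split_ifs with hcol
      · exact rowlt _
      · by_contra hge
        have heq : (σ p : ℕ × ℕ).2 = m := by
          have := rowlt (σ p); omega
        -- build an injection Fin (s+1) ↪ Fin s, contradiction
        set P : Fin (s+1) → PyrBox u s m := fun j =>
          if hj : (j : ℕ) < s then pc j hj else p with hP
        have hProw : ∀ j, (σ (P j) : ℕ × ℕ).2 = m := by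
          intro j
          by_cases hj : (j : ℕ) < s
          · simp only [hP, dif_pos hj]; exact hpc2 j hj
          · simp only [hP, dif_neg hj]; exact heq
        have hPcol : ∀ j : Fin (s+1), (j : ℕ) < s → (P j : ℕ × ℕ).1 = (j : ℕ) := by
          intro j hj
          simp only [hP, dif_pos hj]; exact hpc1 j hj
        set g : Fin (s+1) → Fin s := fun j =>
          ⟨(σ (P j) : ℕ × ℕ).1, colm _ (hProw j)⟩ with hg
        have ginj : Function.Injective g := by
          intro i j hij
          have hσe : σ (P i) = σ (P j) := by
            apply Subtype.ext
            apply Prod.ext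
            · exact congrArg Fin.val hij
            · rw [hProw i, hProw j]
          have hPe : P i = P j := σ.injective hσe
          have hce := congrArg (fun q : PyrBox u s m => (q : ℕ × ℕ).1) hPe
          by_cases hi : (i : ℕ) < s <;> by_cases hj : (j : ℕ) < s
          · rw [hPcol i hi, hPcol j hj] at hce
            exact Fin.ext hce
          · rw [hPcol i hi] at hce
            simp only [hP, dif_neg hj] at hce
            omega
          · rw [hPcol j hj] at hce
            simp only [hP, dif_neg hi] at hce
            omega
          · have hi' := i.isLt
            have hj' := j.isLt
            apply Fin.ext; omega
        have := Fintype.card_le_of_injective g ginj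
        simp only [Fintype.card_fin] at this
        omega
    -- define the column-preserving permutation
    set f : PyrBox u s m → PyrBox u s m := fun p =>
      ⟨((p : ℕ × ℕ).1, (σ p : ℕ × ℕ).2), p.2.1, key p⟩ with hf
    have finj : Function.Injective f := by
      intro p q hpq
      by_contra hne
      have hv := congrArg Subtype.val hpq
      have hcol := congrArg Prod.fst hv
      have hrow := congrArg Prod.snd hv
      exact h p q hne hcol hrow
    set σ0 : Equiv.Perm (PyrBox u s m) :=
      Equiv.ofBijective f (Finite.injective_iff_bijective.mp finj) with hσ0
    refine ⟨σ * σ0⁻¹, σ0, ?_, ?_, (inv_mul_cancel_right σ σ0).symm⟩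
    · intro q
      have hq : σ0 (σ0⁻¹ q) = q := σ0.apply_symm_apply q
      have h3 : f (σ0⁻¹ q) = q := hq
      have h1 : ((σ * σ0⁻¹) q : ℕ × ℕ).2 = (σ (σ0⁻¹ q) : ℕ × ℕ).2 := rfl
      have h2 : (σ (σ0⁻¹ q) : ℕ × ℕ).2 = (f (σ0⁻¹ q) : ℕ × ℕ).2 := rfl
      rw [h1, h2, h3]
    · intro p
      rfl
  · rintro ⟨σf, σ0, hrow, hcol, rfl⟩
    intro p q hne hc
    simp only [Equiv.Perm.mul_apply, hrow]
    intro hr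
    apply hne
    apply σ0.injective
    apply Subtype.ext
    apply Prod.ext
    · rw [hcol p, hcol q, hc]
    · exact hr
end

section
/- Fix integers u ≥ 2 and 1 ≤ s ≤ u−1. For m ∈ ℕ let h^{(m)}_c = m+1 if c < s and h^{(m)}_c = m otherwise (for 0 ≤ c ≤ u−1), let D(m,k) = Σ_{c=0}^{u−1−k} h^{(m)}_c · h^{(m)}_{c+k} for 1 ≤ k ≤ u−1, and let G(m) = Σ_{c=0}^{u−1} (h^{(m)}_c)² − 1. Then for every k with 1 ≤ k ≤ u−1, the quantity D(m,k) + D(m,u−k) − G(m) is independent of m; that is, D(m,k) + D(m,u−k) − G(m) = D(0,k) + D(0,u−k) − G(0) for all m ∈ ℕ. -/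
/-- Column heights of the left-adjusted pyramid of the partition `[u^m, s]`:
`h_c = m + 1` for `c < s` and `h_c = m` otherwise. -/
def pyrH (s m c : ℕ) : ℕ := if c < s then m + 1 else m

/-- `pyrD u s m k = dim g_k = Σ_{c=0}^{u-1-k} h_c · h_{c+k}` for `1 ≤ k ≤ u-1`. -/
def pyrD (u s m k : ℕ) : ℕ := ∑ c ∈ Finset.range (u - k), pyrH s m c * pyrH s m (c + k)

/-- `pyrG u s m = dim g₀ = Σ_{c=0}^{u-1} h_c² - 1`. -/
def pyrG (u s m : ℕ) : ℤ := (∑ c ∈ Finset.range u, (pyrH s m c : ℤ) ^ 2) - 1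

lemma pyrH_succ (s m c : ℕ) : (pyrH s (m+1) c : ℤ) = (pyrH s m c : ℤ) + 1 := by
  unfold pyrH; split <;> push_cast <;> ring

lemma sum_range_split (f : ℕ → ℤ) {k u : ℕ} (hk : k ≤ u) :
    ∑ c ∈ Finset.range u, f c
      = (∑ c ∈ Finset.range (u - k), f c) + ∑ c ∈ Finset.range k, f (c + (u - k)) := by
  have h : u = (u - k) + k := by omega
  rw [h, Finset.sum_range_add]
  simp [add_comm]

lemma pyrD_cast (u s m k : ℕ) :
    (pyrD u s m k : ℤ)
      = ∑ c ∈ Finset.range (u - k), (pyrH s m c : ℤ) * (pyrH s m (c + k) : ℤ) := by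
  simp [pyrD]

lemma pyrD_succ (u s m k : ℕ) :
    (pyrD u s (m+1) k : ℤ)
      = (pyrD u s m k : ℤ) + (∑ c ∈ Finset.range (u - k), (pyrH s m c : ℤ))
        + (∑ c ∈ Finset.range (u - k), (pyrH s m (c + k) : ℤ)) + (u - k : ℕ) := by
  rw [pyrD_cast, pyrD_cast]
  simp only [pyrH_succ]
  rw [Finset.sum_congr rfl (fun c _ => by ring :
    ∀ c ∈ Finset.range (u - k), ((pyrH s m c : ℤ) + 1) * ((pyrH s m (c + k) : ℤ) + 1)
      = (pyrH s m c : ℤ) * (pyrH s m (c + k) : ℤ) + (pyrH s m c : ℤ)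
        + (pyrH s m (c + k) : ℤ) + 1)]
  simp [Finset.sum_add_distrib]

lemma pyrG_succ (u s m : ℕ) :
    pyrG u s (m+1) = pyrG u s m + 2 * (∑ c ∈ Finset.range u, (pyrH s m c : ℤ)) + u := by
  unfold pyrG
  simp only [pyrH_succ]
  rw [Finset.sum_congr rfl (fun c _ => by ring :
    ∀ c ∈ Finset.range u, ((pyrH s m c : ℤ) + 1) ^ 2
      = (pyrH s m c : ℤ) ^ 2 + 2 * (pyrH s m c : ℤ) + 1)]
  simp [Finset.sum_add_distrib, Finset.mul_sum]
  ring

/-- `D(m,k) + D(m,u-k) - G(m)` is independent of `m`. -/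
theorem dim_combination_independent_of_m (u s : ℕ) (hu : 2 ≤ u) (hs1 : 1 ≤ s)
    (hs2 : s ≤ u - 1) (m k : ℕ) (hk1 : 1 ≤ k) (hk2 : k ≤ u - 1) :
    (pyrD u s m k : ℤ) + (pyrD u s m (u - k) : ℤ) - pyrG u s m
      = (pyrD u s 0 k : ℤ) + (pyrD u s 0 (u - k) : ℤ) - pyrG u s 0 := by
  induction m with
  | zero => rfl
  | succ n ih =>
    have hku : k ≤ u := by omega
    have hk' : u - (u - k) = k := by omega
    -- split the full sum two ways
    have h1 := sum_range_split (fun c => (pyrH s n c : ℤ)) hku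
    have h2 := sum_range_split (fun c => (pyrH s n c : ℤ)) (Nat.sub_le u k)
    -- h1 : ∑_{c<u} h c = ∑_{c<u-k} h c + ∑_{c<k} h (c + (u-k))
    -- h2 : ∑_{c<u} h c = ∑_{c<u-(u-k)} h c + ∑_{c<u-(u-k)}... careful
    rw [hk'] at h2
    have hD1 := pyrD_succ u s n k
    have hD2 := pyrD_succ u s n (u - k)
    rw [hk'] at hD2
    have hG := pyrG_succ u s n
    rw [hD1, hD2, hG]
    push_cast [Nat.cast_sub hku] at hD1 hD2 ⊢
    linarith [h1, h2, ih]
end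

section
/- Fix integers u ≥ 2 and 1 ≤ s ≤ u−1. For m ∈ ℕ let h^{(m)}_c = m+1 if c < s and h^{(m)}_c = m otherwise (for 0 ≤ c ≤ u−1), and let D(m,k) = Σ_{c=0}^{u−1−k} h^{(m)}_c · h^{(m)}_{c+k} for 1 ≤ k ≤ u−1. Then for all m ∈ ℕ and 1 ≤ k ≤ u−1, D(m+1,k) − D(m,k) = (u−k) + 2(m+1)·max{0, s−k} + 2m·max{0, (u−s)−k} + (2m+1)·min{s, u−s, k, u−k}. -/
lemma sum_indicator (n t : ℕ) :
    (∑ c ∈ Finset.range n, (if c < t then (1 : ℤ) else 0)) = (min n t : ℕ) := by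
  have h : (Finset.range n).filter (fun c => c < t) = Finset.range (min n t) := by
    ext c; simp [Finset.mem_filter, Finset.mem_range]
  rw [Finset.sum_boole, h, Finset.card_range]

lemma sum_indicator' (n t k : ℕ) :
    (∑ c ∈ Finset.range n, (if c + k < t then (1 : ℤ) else 0)) = (min n (t - k) : ℕ) := by
  have h : (Finset.range n).filter (fun c => c + k < t) = Finset.range (min n (t - k)) := by
    ext c; simp [Finset.mem_filter, Finset.mem_range]; omega
  rw [Finset.sum_boole, h, Finset.card_range]

lemma delta_eq (u s m k : ℕ) :
    (pyrD u s (m + 1) k : ℤ) - (pyrD u s m k : ℤ)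
      = (2 * m + 1) * (u - k : ℕ) + (min (u - k) s : ℕ) + (min (u - k) (s - k) : ℕ) := by
  unfold pyrD
  push_cast
  rw [← Finset.sum_sub_distrib]
  have : ∀ c ∈ Finset.range (u - k),
      ((pyrH s (m + 1) c : ℤ) * (pyrH s (m + 1) (c + k) : ℤ)
        - (pyrH s m c : ℤ) * (pyrH s m (c + k) : ℤ))
      = (2 * m + 1) + (if c < s then (1 : ℤ) else 0) + (if c + k < s then (1 : ℤ) else 0) := by
    intro c _
    unfold pyrH
    split_ifs <;> push_cast <;> ring
  rw [Finset.sum_congr rfl this]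
  rw [Finset.sum_add_distrib, Finset.sum_add_distrib, Finset.sum_const, Finset.card_range,
    sum_indicator, sum_indicator']
  push_cast
  ring

/-- the formula for `δ(m,k) = D(m+1,k) - D(m,k)` from the proof of Theorem 4.8:
`δ(m,k) = (u-k) + 2(m+1)·max{0, s-k} + 2m·max{0, (u-s)-k} + (2m+1)·min{s, u-s, k, u-k}`. -/
theorem delta_formula (u s : ℕ) (hu : 2 ≤ u) (hs1 : 1 ≤ s) (hs2 : s ≤ u - 1)
    (m k : ℕ) (hk1 : 1 ≤ k) (hk2 : k ≤ u - 1) :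
    (pyrD u s (m + 1) k : ℤ) - (pyrD u s m k : ℤ)
      = ((u : ℤ) - k) + 2 * ((m : ℤ) + 1) * max 0 ((s : ℤ) - k)
        + 2 * (m : ℤ) * max 0 (((u : ℤ) - s) - k)
        + (2 * (m : ℤ) + 1) * min (min (s : ℤ) ((u : ℤ) - s)) (min (k : ℤ) ((u : ℤ) - k)) := by
  rw [delta_eq]
  have hcast : ((u - k : ℕ) : ℤ) = (u : ℤ) - k := by omega
  have fact1 : ((u : ℤ) - k)
      = max 0 ((s : ℤ) - k) + max 0 (((u : ℤ) - s) - k)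
        + min (min (s : ℤ) ((u : ℤ) - s)) (min (k : ℤ) ((u : ℤ) - k)) := by
    simp only [min_def, max_def]
    split_ifs <;> omega
  have fact2 : ((min (u - k) s : ℕ) : ℤ)
      = max 0 ((s : ℤ) - k)
        + min (min (s : ℤ) ((u : ℤ) - s)) (min (k : ℤ) ((u : ℤ) - k)) := by
    simp only [min_def, max_def]
    split_ifs <;> omega
  have fact3 : ((min (u - k) (s - k) : ℕ) : ℤ) = max 0 ((s : ℤ) - k) := by
    simp only [min_def, max_def]
    split_ifs <;> omega
  rw [hcast, fact2, fact3]
  linear_combination (2 * (m : ℤ)) * fact1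
end

section
/- Fix integers u ≥ 2 and 1 ≤ s ≤ u−1. For m ∈ ℕ let h^{(m)}_c = m+1 if c < s and h^{(m)}_c = m otherwise (for 0 ≤ c ≤ u−1), let D(m,k) = Σ_{c=0}^{u−1−k} h^{(m)}_c · h^{(m)}_{c+k} for 1 ≤ k ≤ u−1, and set δ(m,k) = D(m+1,k) − D(m,k). Then for all m ∈ ℕ and 1 ≤ k ≤ u−1, δ(m,k) + δ(m,u−k) = 2(mu+s) + u. -/
/-- `pyrδ u s m k = D(m+1,k) - D(m,k)`. -/
def pyrδ (u s m k : ℕ) : ℤ := (pyrD u s (m + 1) k : ℤ) - (pyrD u s m k : ℤ)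

lemma pyr_filt (n s : ℕ) : (Finset.range n).filter (fun c => c < s) = Finset.range (min s n) := by
  ext c; simp only [Finset.mem_filter, Finset.mem_range]; omega

lemma pyr_filt2 (n s k : ℕ) :
    (Finset.range n).filter (fun c => c + k < s) = Finset.range (min (s - k) n) := by
  ext c; simp only [Finset.mem_filter, Finset.mem_range]; omega

lemma pyrδ_eq (u s m k : ℕ) (hs : s ≤ u) (hk : k ≤ u) :
    pyrδ u s m k = (((u - k) * (2 * m + 1) + min s (u - k) + (s - min s k) : ℕ) : ℤ) := by
  unfold pyrδ pyrD
  push_cast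
  rw [← Finset.sum_sub_distrib]
  have hterm : ∀ c ∈ Finset.range (u - k),
      (pyrH s (m + 1) c * pyrH s (m + 1) (c + k) : ℤ) - pyrH s m c * pyrH s m (c + k)
      = (2 * m + 1) + ((if c < s then (1 : ℤ) else 0) + (if c + k < s then (1 : ℤ) else 0)) := by
    intro c _
    unfold pyrH
    split_ifs <;> push_cast <;> ring
  rw [Finset.sum_congr rfl hterm, Finset.sum_add_distrib, Finset.sum_const]
  have hA : ∑ c ∈ Finset.range (u - k), (if c < s then (1 : ℤ) else 0)
      = ((min s (u - k) : ℕ) : ℤ) := by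
    rw [Finset.sum_boole, pyr_filt, Finset.card_range]
  have hB : ∑ c ∈ Finset.range (u - k), (if c + k < s then (1 : ℤ) else 0)
      = ((min (s - k) (u - k) : ℕ) : ℤ) := by
    rw [Finset.sum_boole, pyr_filt2, Finset.card_range]
  rw [Finset.sum_add_distrib, hA, hB]
  have hm : min (s - k) (u - k) = s - min s k := by omega
  rw [hm]
  simp only [nsmul_eq_mul, Finset.card_range]
  push_cast
  ring

/-- `δ(m,k) + δ(m,u-k) = 2(mu+s) + u`. -/
theorem delta_sum (u s : ℕ) (hu : 2 ≤ u) (hs1 : 1 ≤ s) (hs2 : s ≤ u - 1)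
    (m k : ℕ) (hk1 : 1 ≤ k) (hk2 : k ≤ u - 1) :
    pyrδ u s m k + pyrδ u s m (u - k) = 2 * ((m : ℤ) * u + s) + u := by
  have hsu : s ≤ u := by omega
  have hku : k ≤ u := by omega
  rw [pyrδ_eq u s m k hsu hku, pyrδ_eq u s m (u - k) hsu (by omega), ← Nat.cast_add]
  have hkey : (u - k) * (2 * m + 1) + min s (u - k) + (s - min s k)
      + ((u - (u - k)) * (2 * m + 1) + min s (u - (u - k)) + (s - min s (u - k)))
      = 2 * (m * u + s) + u := by
    have h1 : u - (u - k) = k := by omega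
    have h2 : (u - k) * (2 * m + 1) + k * (2 * m + 1) = u * (2 * m + 1) := by
      rw [← Nat.add_mul]; congr 1; omega
    have h3 : u * (2 * m + 1) = 2 * (m * u) + u := by ring
    rw [h1]
    omega
  rw [hkey]
  push_cast
  ring
end

section
/- Let u ≥ 1, m ≥ 0 and let a : Fin u → ℤ be nondecreasing with a_j ≥ 1 for all j. Set n = mu + s for any s ≥ max_j a_j (so that b_j := m·j + a_j satisfies 1 ≤ b_j ≤ n), S = Σ_{j=0}^{u−1} a_j, M = Σ_{k=1}^{u} k·a_{u−k}. Then, as rational numbers, Σ_{j=0}^{u−1} Σ_{k=0}^{u−1} ( min(b_j, b_k) − b_j·b_k/n ) = m(2u³ − 3u² + u)/6 + 2M − S − (1/n)·( m²·u²(u−1)²/4 + m·u(u−1)·S + S² ). -/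
open Finset

lemma sum_min_mono (u : ℕ) (f : ℕ → ℤ) (hf : Monotone f) :
    ∑ j ∈ range u, ∑ k ∈ range u, min (f j) (f k)
      = ∑ j ∈ range u, (2*(u:ℤ) - 2*j - 1) * f j := by
  induction u with
  | zero => simp
  | succ n ih =>
    rw [Finset.sum_range_succ]
    simp_rw [Finset.sum_range_succ]
    rw [Finset.sum_add_distrib, ih, min_self]
    have e1 : ∀ j ∈ range n, min (f j) (f n) = f j := fun j hj =>
      min_eq_left (hf (le_of_lt (mem_range.mp hj)))
    have e2 : ∀ k ∈ range n, min (f n) (f k) = f k := fun k hk =>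
      min_eq_right (hf (le_of_lt (mem_range.mp hk)))
    rw [Finset.sum_congr rfl e1, Finset.sum_congr rfl e2]
    have : ∀ j ∈ range n, (2*((n:ℤ)+1) - 2*j - 1) * f j
        = (2*(n:ℤ) - 2*j - 1) * f j + 2 * f j := fun j _ => by ring
    push_cast
    rw [Finset.sum_congr rfl this, Finset.sum_add_distrib]
    rw [show ∑ j ∈ range n, 2 * f j = 2 * (range n).sum f from (Finset.mul_sum _ _ _).symm]
    ring

lemma gauss1 (u : ℕ) : ∑ j ∈ range u, (j:ℚ) = u*(u-1)/2 := by
  induction u with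
  | zero => simp
  | succ n ih => rw [Finset.sum_range_succ, ih]; push_cast; ring

lemma gauss2 (u : ℕ) : ∑ j ∈ range u, (j:ℚ)^2 = u*(u-1)*(2*u-1)/6 := by
  induction u with
  | zero => simp
  | succ n ih => rw [Finset.sum_range_succ, ih]; push_cast; ring

/-- closed formula for `|η|²` from the proof of Proposition 4.25.
Here `b j = m·j + a j`, `n = m·u + s`, `S = Σ_j a_j` and `M = Σ_{k=1}^u k·a_{u-k}`
(the index `i : Fin u` in `M` corresponds to `k = i + 1`). -/
theorem eta_norm_squared (u m : ℕ) (hu : 1 ≤ u) (a : Fin u → ℤ)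
    (ha1 : ∀ j, 1 ≤ a j) (hmono : Monotone a)
    (s : ℕ) (hs : ∀ j, a j ≤ (s : ℤ)) :
    ∑ j : Fin u, ∑ k : Fin u,
        (((min ((m : ℤ) * (j : ℕ) + a j) ((m : ℤ) * (k : ℕ) + a k) : ℤ) : ℚ)
          - (((m : ℤ) * (j : ℕ) + a j : ℤ) : ℚ) * (((m : ℤ) * (k : ℕ) + a k : ℤ) : ℚ)
              / ((m * u + s : ℕ) : ℚ))
      = (m : ℚ) * (2 * (u : ℚ) ^ 3 - 3 * (u : ℚ) ^ 2 + u) / 6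
        + 2 * (∑ i : Fin u, (((i : ℕ) + 1 : ℕ) : ℚ) * ((a ⟨u - ((i : ℕ) + 1), by omega⟩ : ℤ) : ℚ))
        - ((∑ j : Fin u, a j : ℤ) : ℚ)
        - (1 / ((m * u + s : ℕ) : ℚ)) *
            ((m : ℚ) ^ 2 * (u : ℚ) ^ 2 * ((u : ℚ) - 1) ^ 2 / 4
              + (m : ℚ) * u * ((u : ℚ) - 1) * ((∑ j : Fin u, a j : ℤ) : ℚ)
              + (((∑ j : Fin u, a j : ℤ) : ℚ)) ^ 2) := by
  have hs1 : 1 ≤ s := by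
    have h0 := (ha1 ⟨0, hu⟩).trans (hs ⟨0, hu⟩)
    exact_mod_cast h0
  have hN : ((m * u + s : ℕ) : ℚ) ≠ 0 := by
    exact Nat.cast_ne_zero.mpr (by omega)
  set az : ℕ → ℤ := fun j => a ⟨min j (u-1), by omega⟩ with haz_def
  have haz : ∀ j : Fin u, a j = az (j : ℕ) := by
    intro j
    have hj := j.isLt
    simp only [haz_def]
    congr 1
    exact (Fin.ext (by simp only []; omega)).symm
  have hazmono : Monotone az := by
    intro j k h
    exact hmono (by simp only [Fin.mk_le_mk]; omega)
  have hbzmono : Monotone (fun j : ℕ => (m:ℤ) * j + az j) := by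
    intro j k h
    exact add_le_add (by exact_mod_cast Nat.mul_le_mul_left m h) (hazmono h)
  simp_rw [haz]
  simp_rw [Fin.sum_univ_eq_sum_range]
  have hmin := sum_min_mono u (fun j => (m:ℤ)*j + az j) hbzmono
  beta_reduce at hmin
  have hminQ : ∑ j ∈ range u, ∑ k ∈ range u, ((((m:ℤ)*j + az j) ⊓ ((m:ℤ)*k + az k) : ℤ):ℚ)
      = ∑ j ∈ range u, (2*(u:ℚ) - 2*(j:ℚ) - 1) * (((m:ℤ)*j + az j : ℤ):ℚ) := by
    exact_mod_cast congrArg (fun z : ℤ => (z : ℚ)) hmin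
  have hsplit : (∑ j ∈ range u, ∑ k ∈ range u,
        (((((m:ℤ)*j + az j) ⊓ ((m:ℤ)*k + az k) : ℤ):ℚ)
          - (((m:ℤ)*j + az j : ℤ):ℚ) * (((m:ℤ)*k + az k : ℤ):ℚ) / ((m*u+s:ℕ):ℚ)))
      = (∑ j ∈ range u, ∑ k ∈ range u, ((((m:ℤ)*j + az j) ⊓ ((m:ℤ)*k + az k) : ℤ):ℚ))
        - (∑ j ∈ range u, (((m:ℤ)*j + az j : ℤ):ℚ)) * (∑ j ∈ range u, (((m:ℤ)*j + az j : ℤ):ℚ))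
            / ((m*u+s:ℕ):ℚ) := by
    simp only [Finset.sum_sub_distrib]
    congr 1
    rw [Finset.sum_mul, Finset.sum_div]
    exact Finset.sum_congr rfl fun j _ => by rw [Finset.mul_sum, Finset.sum_div]
  have cM := Fin.sum_univ_eq_sum_range
      (fun i => ((i + 1 : ℕ):ℚ) * ((az (u - (i + 1)) : ℤ):ℚ)) u
  have cD1 := Fin.sum_univ_eq_sum_range
      (fun j => ∑ y : Fin u,
        (((((m:ℤ)*j + az j) ⊓ ((m:ℤ)*(y:ℕ) + az (y:ℕ)) : ℤ):ℚ)
          - (((m:ℤ)*j + az j : ℤ):ℚ) * (((m:ℤ)*(y:ℕ) + az (y:ℕ) : ℤ):ℚ) / ((m*u+s:ℕ):ℚ))) u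
  beta_reduce at cM cD1
  rw [cM, cD1]
  have cD2 : ∀ j ∈ range u, (∑ y : Fin u,
        (((((m:ℤ)*j + az j) ⊓ ((m:ℤ)*(y:ℕ) + az (y:ℕ)) : ℤ):ℚ)
          - (((m:ℤ)*j + az j : ℤ):ℚ) * (((m:ℤ)*(y:ℕ) + az (y:ℕ) : ℤ):ℚ) / ((m*u+s:ℕ):ℚ)))
      = ∑ k ∈ range u,
        (((((m:ℤ)*j + az j) ⊓ ((m:ℤ)*k + az k) : ℤ):ℚ)
          - (((m:ℤ)*j + az j : ℤ):ℚ) * (((m:ℤ)*k + az k : ℤ):ℚ) / ((m*u+s:ℕ):ℚ)) := by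
    intro j _
    have h := Fin.sum_univ_eq_sum_range
      (fun k => (((((m:ℤ)*j + az j) ⊓ ((m:ℤ)*k + az k) : ℤ):ℚ)
          - (((m:ℤ)*j + az j : ℤ):ℚ) * (((m:ℤ)*k + az k : ℤ):ℚ) / ((m*u+s:ℕ):ℚ))) u
    beta_reduce at h
    exact h
  rw [Finset.sum_congr rfl cD2, hsplit, hminQ]
  push_cast
  push_cast at hN
  have e3 : ∑ x ∈ range u, ((x:ℚ) + 1) * ((az (u - (x+1)) : ℤ):ℚ)
      = ∑ x ∈ range u, ((u:ℚ) - (x:ℚ)) * ((az x : ℤ):ℚ) := by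
    rw [← Finset.sum_range_reflect (fun x => ((u:ℚ) - (x:ℚ)) * ((az x : ℤ):ℚ)) u]
    apply Finset.sum_congr rfl
    intro i hi
    have hi' : i < u := mem_range.mp hi
    have h1 : u - 1 - i = u - (i+1) := by omega
    have h2 : ((u - 1 - i : ℕ):ℚ) = (u:ℚ) - (i:ℚ) - 1 := by
      rw [h1, Nat.cast_sub (by omega)]
      push_cast
      ring
    rw [h2, h1]
    ring
  rw [e3]
  have q1 : ∑ x ∈ range u, (2*(u:ℚ) - 2*(x:ℚ) - 1) * ((m:ℚ)*(x:ℚ) + ((az x : ℤ):ℚ))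
      = (2*(u:ℚ)*(m:ℚ) - (m:ℚ)) * (∑ x ∈ range u, (x:ℚ))
        - 2*(m:ℚ) * (∑ x ∈ range u, (x:ℚ)^2)
        + (2*(u:ℚ) - 1) * (∑ x ∈ range u, ((az x : ℤ):ℚ))
        - 2 * (∑ x ∈ range u, (x:ℚ) * ((az x : ℤ):ℚ)) := by
    simp only [Finset.mul_sum, ← Finset.sum_add_distrib, ← Finset.sum_sub_distrib]
    all_goals exact Finset.sum_congr rfl fun x _ => by ring
  have q2 : ∑ x ∈ range u, ((m:ℚ)*(x:ℚ) + ((az x : ℤ):ℚ))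
      = (m:ℚ) * (∑ x ∈ range u, (x:ℚ)) + (∑ x ∈ range u, ((az x : ℤ):ℚ)) := by
    simp only [Finset.mul_sum, ← Finset.sum_add_distrib]
    all_goals exact Finset.sum_congr rfl fun x _ => by ring
  have q3 : ∑ x ∈ range u, ((u:ℚ) - (x:ℚ)) * ((az x : ℤ):ℚ)
      = (u:ℚ) * (∑ x ∈ range u, ((az x : ℤ):ℚ))
        - (∑ x ∈ range u, (x:ℚ) * ((az x : ℤ):ℚ)) := by
    simp only [Finset.mul_sum, ← Finset.sum_sub_distrib]
    all_goals exact Finset.sum_congr rfl fun x _ => by ring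
  rw [q1, q2, q3, gauss1, gauss2]
  field_simp
  ring
end

section
/- Fix integers u ≥ 2, 1 ≤ s ≤ u−1, and a nondecreasing function a : Fin u → ℤ with 1 ≤ a_j ≤ s for all j. For m ∈ ℕ set n = mu + s, b_j = m·j + a_j, F(i,j) = min(i,j) − ij/n ∈ ℚ (for 0 ≤ i,j ≤ n), and define N_m(a) = (u/(2n))·Σ_{i=1}^{n−1} Σ_{j=1}^{n−1} F(i,j) − Σ_{i=1}^{n−1} Σ_{j=0}^{u−1} F(i, b_j) + (n/(2u))·Σ_{j=0}^{u−1} Σ_{k=0}^{u−1} F(b_j, b_k) − n²/(24u). Then N_m(a) is independent of m: N_m(a) = N_0(a) for all m ∈ ℕ. -/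
lemma q_sum_range_id (n : ℕ) : ∑ i ∈ Finset.range n, (i:ℚ) = n*(n-1)/2 := by
  induction n with
  | zero => simp
  | succ k ih => rw [Finset.sum_range_succ, ih]; push_cast; ring

lemma q_sum_range_sq (n : ℕ) : ∑ i ∈ Finset.range n, (i:ℚ)^2 = n*(n-1)*(2*n-1)/6 := by
  induction n with
  | zero => simp
  | succ k ih => rw [Finset.sum_range_succ, ih]; push_cast; ring

lemma sum_Ico_one_eq_range (f : ℕ → ℚ) (hf : f 0 = 0) (n : ℕ) :
    ∑ i ∈ Finset.Ico 1 n, f i = ∑ i ∈ Finset.range n, f i := by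
  rcases Nat.eq_zero_or_pos n with h|h
  · subst h; simp
  · rw [Finset.range_eq_Ico, Finset.sum_eq_sum_Ico_succ_bot h, hf, zero_add]

lemma q_sum_Ico_id (n : ℕ) : ∑ i ∈ Finset.Ico 1 n, (i:ℚ) = n*(n-1)/2 := by
  rw [sum_Ico_one_eq_range (fun i => (i:ℚ)) (by simp), q_sum_range_id]

lemma q_sum_Ico_sq (n : ℕ) : ∑ i ∈ Finset.Ico 1 n, (i:ℚ)^2 = n*(n-1)*(2*n-1)/6 := by
  rw [sum_Ico_one_eq_range (fun i => (i:ℚ)^2) (by simp), q_sum_range_sq]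

lemma Fsum (n c : ℕ) (h1 : 1 ≤ c) (h2 : c ≤ n) :
    ∑ i ∈ Finset.Ico 1 n, (min (i:ℚ) (c:ℚ) - (i:ℚ)*(c:ℚ)/(n:ℚ)) = (c:ℚ)*((n:ℚ)-(c:ℚ))/2 := by
  have hn0 : (n:ℚ) ≠ 0 := Nat.cast_ne_zero.mpr (by omega)
  rw [Finset.sum_sub_distrib]
  have hmin : ∑ i ∈ Finset.Ico 1 n, min (i:ℚ) (c:ℚ)
      = (c:ℚ)*((c:ℚ)-1)/2 + (c:ℚ)*((n:ℚ)-(c:ℚ)) := by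
    rw [← Finset.sum_Ico_consecutive _ h1 h2]
    have e1 : ∑ i ∈ Finset.Ico 1 c, min (i:ℚ) (c:ℚ) = ∑ i ∈ Finset.Ico 1 c, (i:ℚ) :=
      Finset.sum_congr rfl (fun i hi =>
        min_eq_left (by exact_mod_cast Nat.le_of_lt (Finset.mem_Ico.mp hi).2))
    have e2 : ∑ i ∈ Finset.Ico c n, min (i:ℚ) (c:ℚ) = ∑ _i ∈ Finset.Ico c n, (c:ℚ) :=
      Finset.sum_congr rfl (fun i hi =>
        min_eq_right (by exact_mod_cast (Finset.mem_Ico.mp hi).1))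
    rw [e1, e2, q_sum_Ico_id, Finset.sum_const, Nat.card_Ico, nsmul_eq_mul]
    have : ((n - c : ℕ) : ℚ) = (n:ℚ) - (c:ℚ) := by
      have := Nat.cast_sub (R := ℚ) h2; exact this
    rw [this]; ring
  have hlin : ∑ i ∈ Finset.Ico 1 n, (i:ℚ)*(c:ℚ)/(n:ℚ)
      = ((n:ℚ)*((n:ℚ)-1)/2)*(c:ℚ)/(n:ℚ) := by
    rw [← Finset.sum_div, ← Finset.sum_mul, q_sum_Ico_id]
  rw [hmin, hlin]; field_simp; ring

lemma S1 (n : ℕ) (hn : 1 ≤ n) :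
    ∑ i ∈ Finset.Ico 1 n, ∑ j ∈ Finset.Ico 1 n,
      (min (i:ℚ) (j:ℚ) - (i:ℚ)*(j:ℚ)/(n:ℚ)) = (n:ℚ)*((n:ℚ)^2-1)/12 := by
  have hn0 : (n:ℚ) ≠ 0 := Nat.cast_ne_zero.mpr (by omega)
  have step : ∀ i ∈ Finset.Ico 1 n, ∑ j ∈ Finset.Ico 1 n,
      (min (i:ℚ) (j:ℚ) - (i:ℚ)*(j:ℚ)/(n:ℚ)) = (i:ℚ)*((n:ℚ)-(i:ℚ))/2 := by
    intro i hi
    obtain ⟨hi1, hi2⟩ := Finset.mem_Ico.mp hi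
    rw [← Fsum n i hi1 (le_of_lt hi2)]
    exact Finset.sum_congr rfl fun j _ => by rw [min_comm (i:ℚ)]; ring
  rw [Finset.sum_congr rfl step]
  have e : ∑ i ∈ Finset.Ico 1 n, (i:ℚ)*((n:ℚ)-(i:ℚ))/2
      = ((n:ℚ)*(∑ i ∈ Finset.Ico 1 n, (i:ℚ)) - ∑ i ∈ Finset.Ico 1 n, (i:ℚ)^2)/2 := by
    rw [Finset.mul_sum, ← Finset.sum_sub_distrib, ← Finset.sum_div]
    exact congrArg (·/2) (Finset.sum_congr rfl fun i _ => by ring)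
  rw [e, q_sum_Ico_id, q_sum_Ico_sq]
  field_simp; ring

lemma pair_min (g : ℕ → ℚ) (u : ℕ) :
    ∑ j ∈ Finset.range u, ∑ k ∈ Finset.range u, g (min j k)
      = ∑ j ∈ Finset.range u, (2*(u:ℚ) - 2*(j:ℚ) - 1) * g j := by
  induction u with
  | zero => simp
  | succ v ih =>
    rw [Finset.sum_range_succ]
    have h1 : ∀ j ∈ Finset.range v, ∑ k ∈ Finset.range (v+1), g (min j k)
        = (∑ k ∈ Finset.range v, g (min j k)) + g j := by
      intro j hj
      rw [Finset.sum_range_succ, min_eq_left (le_of_lt (Finset.mem_range.mp hj))]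
    have h2 : ∑ k ∈ Finset.range (v+1), g (min v k)
        = (∑ k ∈ Finset.range v, g k) + g v := by
      rw [Finset.sum_range_succ, min_self]
      congr 1
      exact Finset.sum_congr rfl fun k hk => by
        rw [min_eq_right (le_of_lt (Finset.mem_range.mp hk))]
    rw [Finset.sum_congr rfl h1, h2, Finset.sum_add_distrib, ih, Finset.sum_range_succ]
    have h3 : ∀ j ∈ Finset.range v,
        (2*((v+1 : ℕ):ℚ) - 2*(j:ℚ) - 1)*g j = (2*(v:ℚ) - 2*(j:ℚ) - 1)*g j + 2*g j := by
      intro j _; push_cast; ring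
    rw [Finset.sum_congr rfl h3, Finset.sum_add_distrib]
    have h4 : ∑ j ∈ Finset.range v, 2*g j = 2 * ∑ j ∈ Finset.range v, g j := by
      rw [Finset.mul_sum]
    rw [h4]
    push_cast
    ring

lemma pair_min_fin (u : ℕ) (β : Fin u → ℚ) (hm : Monotone β) :
    ∑ j : Fin u, ∑ k : Fin u, min (β j) (β k)
      = ∑ j : Fin u, (2*(u:ℚ) - 2*((j:ℕ):ℚ) - 1) * β j := by
  classical
  set β' : ℕ → ℚ := fun i => if h : i < u then β ⟨i, h⟩ else 0 with hβ'def
  have hβ : ∀ j : Fin u, β j = β' (j:ℕ) := by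
    intro j; simp [hβ'def, j.isLt]
  have hmin : ∀ j k : Fin u, min (β j) (β k) = β' (min (j:ℕ) (k:ℕ)) := by
    intro j k
    rcases le_total j k with h|h
    · rw [min_eq_left (hm h), min_eq_left (Fin.le_def.mp h), hβ j]
    · rw [min_eq_right (hm h), min_eq_right (Fin.le_def.mp h), hβ k]
  calc ∑ j : Fin u, ∑ k : Fin u, min (β j) (β k)
      = ∑ j : Fin u, ∑ k : Fin u, β' (min (j:ℕ) (k:ℕ)) :=
        Finset.sum_congr rfl fun j _ => Finset.sum_congr rfl fun k _ => hmin j k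
    _ = ∑ j ∈ Finset.range u, ∑ k ∈ Finset.range u, β' (min j k) := by
        rw [Fin.sum_univ_eq_sum_range (fun jn => ∑ k : Fin u, β' (min jn (k:ℕ))) u]
        exact Finset.sum_congr rfl fun j _ =>
          Fin.sum_univ_eq_sum_range (fun kn => β' (min j kn)) u
    _ = ∑ j ∈ Finset.range u, (2*(u:ℚ) - 2*(j:ℚ) - 1) * β' j := pair_min β' u
    _ = ∑ j : Fin u, (2*(u:ℚ) - 2*((j:ℕ):ℚ) - 1) * β j := by
        rw [← Fin.sum_univ_eq_sum_range (fun jn => (2*(u:ℚ) - 2*(jn:ℚ) - 1) * β' jn) u]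
        exact Finset.sum_congr rfl fun j _ => by rw [hβ j]

lemma reduce (n u : ℕ) (hn : 1 ≤ n) (hu : 1 ≤ u) (b : Fin u → ℚ) (c : Fin u → ℕ)
    (hbc : ∀ j, b j = ((c j : ℕ) : ℚ)) (h1 : ∀ j, 1 ≤ c j) (h2 : ∀ j, c j ≤ n)
    (hmb : Monotone b) :
    (u : ℚ) / (2 * (n:ℚ)) *
        ∑ i ∈ Finset.Ico 1 n, ∑ j ∈ Finset.Ico 1 n,
          (min (i : ℚ) (j : ℚ) - (i : ℚ) * (j : ℚ) / (n : ℚ))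
      - ∑ i ∈ Finset.Ico 1 n, ∑ j : Fin u,
          (min (i : ℚ) (b j) - (i : ℚ) * (b j) / (n : ℚ))
      + (n : ℚ) / (2 * (u : ℚ)) *
          ∑ j : Fin u, ∑ k : Fin u,
            (min (b j) (b k) - (b j) * (b k) / (n : ℚ))
      - (n : ℚ) ^ 2 / (24 * (u : ℚ))
    = (u:ℚ)*((n:ℚ)^2-1)/24 - (n:ℚ)^2/(24*(u:ℚ))
      - ∑ j : Fin u, (b j)*((n:ℚ) - b j)/2
      + (n:ℚ)/(2*(u:ℚ)) * (∑ j : Fin u, (2*(u:ℚ) - 2*((j:ℕ):ℚ) - 1) * b j)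
      - (∑ j : Fin u, b j)^2/(2*(u:ℚ)) := by
  have hn0 : (n:ℚ) ≠ 0 := Nat.cast_ne_zero.mpr (by omega)
  have hu0 : (u:ℚ) ≠ 0 := Nat.cast_ne_zero.mpr (by omega)
  rw [S1 n hn]
  have hT2 : ∑ i ∈ Finset.Ico 1 n, ∑ j : Fin u,
        (min (i : ℚ) (b j) - (i : ℚ) * (b j) / (n : ℚ))
      = ∑ j : Fin u, (b j)*((n:ℚ) - b j)/2 := by
    rw [Finset.sum_comm]
    refine Finset.sum_congr rfl fun j _ => ?_
    rw [hbc j]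
    exact Fsum n (c j) (h1 j) (h2 j)
  rw [hT2]
  have hT3 : ∑ j : Fin u, ∑ k : Fin u, (min (b j) (b k) - (b j) * (b k) / (n : ℚ))
      = (∑ j : Fin u, (2*(u:ℚ) - 2*((j:ℕ):ℚ) - 1) * b j)
        - (∑ j : Fin u, b j)^2/(n:ℚ) := by
    have e1 : ∀ j : Fin u, ∑ k : Fin u, (min (b j) (b k) - (b j) * (b k) / (n : ℚ))
        = (∑ k : Fin u, min (b j) (b k)) - ∑ k : Fin u, (b j) * (b k) / (n : ℚ) :=
      fun j => Finset.sum_sub_distrib _ _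
    rw [Finset.sum_congr rfl (fun j _ => e1 j), Finset.sum_sub_distrib,
      pair_min_fin u b hmb]
    congr 1
    rw [sq, Finset.sum_mul_sum, Finset.sum_div]
    exact Finset.sum_congr rfl fun j _ => (Finset.sum_div _ _ _).symm
  rw [hT3]
  field_simp
  ring

/-- The quantity `N_m(a) = (u/2n)|ρ - (n/u)η|² - n²/(24u)` of Proposition 4.25, written via the
Gram matrix `F(i,j) = min(i,j) - ij/n` of the fundamental weights of `sl_n` (with `ϖ_0 = ϖ_n = 0`),
where `n = mu + s`, `η = Σ_{j<u} ϖ_{b_j}` and `b_j = m·j + a_j`.  Explicitly,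
`N_m(a) = (u/2n)·Σ_{i,j=1}^{n-1} F(i,j) - Σ_{i=1}^{n-1} Σ_{j<u} F(i,b_j)
  + (n/2u)·Σ_{j,k<u} F(b_j,b_k) - n²/(24u)`. -/
noncomputable def Nval (u s : ℕ) (a : Fin u → ℤ) (m : ℕ) : ℚ :=
  (u : ℚ) / (2 * ((m * u + s : ℕ) : ℚ)) *
      ∑ i ∈ Finset.Ico 1 (m * u + s), ∑ j ∈ Finset.Ico 1 (m * u + s),
        (min (i : ℚ) (j : ℚ) - (i : ℚ) * (j : ℚ) / ((m * u + s : ℕ) : ℚ))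
    - ∑ i ∈ Finset.Ico 1 (m * u + s), ∑ j : Fin u,
        (min (i : ℚ) ((m : ℚ) * ((j : ℕ) : ℚ) + ((a j : ℤ) : ℚ))
          - (i : ℚ) * ((m : ℚ) * ((j : ℕ) : ℚ) + ((a j : ℤ) : ℚ)) / ((m * u + s : ℕ) : ℚ))
    + ((m * u + s : ℕ) : ℚ) / (2 * (u : ℚ)) *
        ∑ j : Fin u, ∑ k : Fin u,
          (min ((m : ℚ) * ((j : ℕ) : ℚ) + ((a j : ℤ) : ℚ))
              ((m : ℚ) * ((k : ℕ) : ℚ) + ((a k : ℤ) : ℚ))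
            - ((m : ℚ) * ((j : ℕ) : ℚ) + ((a j : ℤ) : ℚ))
              * ((m : ℚ) * ((k : ℕ) : ℚ) + ((a k : ℤ) : ℚ)) / ((m * u + s : ℕ) : ℚ))
    - ((m * u + s : ℕ) : ℚ) ^ 2 / (24 * (u : ℚ))


lemma Nval_closed (u s : ℕ) (hu : 1 ≤ u) (hs : 1 ≤ s) (a : Fin u → ℤ)
    (hmono : Monotone a) (ha : ∀ j, 1 ≤ a j ∧ a j ≤ (s : ℤ)) (m : ℕ) :
    Nval u s a m =
      (u:ℚ)*((s:ℚ)^2 - 1)/24 - (s:ℚ)^2/(24*(u:ℚ))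
      - ((s:ℚ)*(∑ j : Fin u, ((a j : ℤ):ℚ)) - ∑ j : Fin u, ((a j : ℤ):ℚ)^2)/2
      + (s:ℚ)*((2*(u:ℚ)-1)*(∑ j : Fin u, ((a j : ℤ):ℚ))
          - 2*∑ j : Fin u, ((j:ℕ):ℚ)*((a j : ℤ):ℚ))/(2*(u:ℚ))
      - (∑ j : Fin u, ((a j : ℤ):ℚ))^2/(2*(u:ℚ)) := by
  have hn1 : 1 ≤ m*u + s := hs.trans (Nat.le_add_left s (m*u))
  have hu0 : (u:ℚ) ≠ 0 := Nat.cast_ne_zero.mpr (by omega)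
  rw [Nval]
  refine (reduce (m*u+s) u hn1 hu
      (fun j => (m : ℚ) * ((j : ℕ) : ℚ) + ((a j : ℤ) : ℚ))
      (fun j => m * (j:ℕ) + (a j).toNat) ?_ ?_ ?_ ?_).trans ?_
  · intro j
    have h0 : (0:ℤ) ≤ a j := le_trans zero_le_one (ha j).1
    have hc : (((a j).toNat : ℤ) : ℚ) = ((a j : ℤ) : ℚ) := by
      rw [Int.toNat_of_nonneg h0]
    push_cast
    push_cast at hc
    rw [hc]
  · intro j
    show 1 ≤ m * (j:ℕ) + (a j).toNat
    have := (ha j).1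
    omega
  · intro j
    show m * (j:ℕ) + (a j).toNat ≤ m * u + s
    have h3 : (a j).toNat ≤ s := by have := (ha j).2; omega
    have h4 : m * (j:ℕ) ≤ m * u := Nat.mul_le_mul_left m (Nat.le_of_lt j.isLt)
    omega
  · intro j k hjk
    have hn' : ((j:ℕ):ℚ) ≤ ((k:ℕ):ℚ) := by exact_mod_cast Fin.le_def.mp hjk
    have h2 : ((a j : ℤ):ℚ) ≤ ((a k : ℤ):ℚ) := by exact_mod_cast hmono hjk
    exact add_le_add (mul_le_mul_of_nonneg_left hn' (Nat.cast_nonneg m)) h2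
  -- the expansion identity
  · have hS : ∑ j : Fin u, ((j:ℕ):ℚ) = (u:ℚ)*((u:ℚ)-1)/2 := by
      rw [Fin.sum_univ_eq_sum_range (fun i => (i:ℚ)) u, q_sum_range_id]
    have hS2 : ∑ j : Fin u, ((j:ℕ):ℚ)^2 = (u:ℚ)*((u:ℚ)-1)*(2*(u:ℚ)-1)/6 := by
      rw [Fin.sum_univ_eq_sum_range (fun i => (i:ℚ)^2) u, q_sum_range_sq]
    have hN : ((m*u+s : ℕ):ℚ) = (m:ℚ)*(u:ℚ) + (s:ℚ) := by push_cast; ring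
    have hb1 : ∑ j : Fin u, ((m : ℚ) * ((j : ℕ) : ℚ) + ((a j : ℤ) : ℚ))
          * (((m*u+s : ℕ):ℚ) - ((m : ℚ) * ((j : ℕ) : ℚ) + ((a j : ℤ) : ℚ)))/2
        = (((m*u+s : ℕ):ℚ)*(m:ℚ)/2) * (∑ j : Fin u, ((j:ℕ):ℚ))
          + (((m*u+s : ℕ):ℚ)/2) * (∑ j : Fin u, ((a j : ℤ):ℚ))
          - (((m:ℚ)^2/2) * (∑ j : Fin u, ((j:ℕ):ℚ)^2)
            + (m:ℚ) * (∑ j : Fin u, ((j:ℕ):ℚ)*((a j : ℤ):ℚ))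
            + (1/2) * (∑ j : Fin u, ((a j : ℤ):ℚ)^2)) := by
      rw [Finset.mul_sum, Finset.mul_sum, Finset.mul_sum, Finset.mul_sum, Finset.mul_sum,
        ← Finset.sum_add_distrib, ← Finset.sum_add_distrib, ← Finset.sum_add_distrib,
        ← Finset.sum_sub_distrib]
      exact Finset.sum_congr rfl fun j _ => by ring
    have hb2 : ∑ j : Fin u, (2*(u:ℚ) - 2*((j:ℕ):ℚ) - 1)
          * ((m : ℚ) * ((j : ℕ) : ℚ) + ((a j : ℤ) : ℚ))
        = ((m:ℚ)*(2*(u:ℚ)-1)) * (∑ j : Fin u, ((j:ℕ):ℚ))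
          - (2*(m:ℚ)) * (∑ j : Fin u, ((j:ℕ):ℚ)^2)
          + (2*(u:ℚ)-1) * (∑ j : Fin u, ((a j : ℤ):ℚ))
          - 2 * (∑ j : Fin u, ((j:ℕ):ℚ)*((a j : ℤ):ℚ)) := by
      rw [Finset.mul_sum, Finset.mul_sum, Finset.mul_sum, Finset.mul_sum,
        ← Finset.sum_sub_distrib, ← Finset.sum_add_distrib, ← Finset.sum_sub_distrib]
      exact Finset.sum_congr rfl fun j _ => by ring
    have hb3 : ∑ j : Fin u, ((m : ℚ) * ((j : ℕ) : ℚ) + ((a j : ℤ) : ℚ))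
        = (m:ℚ) * (∑ j : Fin u, ((j:ℕ):ℚ)) + ∑ j : Fin u, ((a j : ℤ):ℚ) := by
      rw [Finset.mul_sum, ← Finset.sum_add_distrib]
    rw [hb1, hb2, hb3, hS, hS2, hN]
    field_simp
    ring

/-- Proposition 4.25: `N_m(a)` is independent of `m`. -/
theorem Nval_independent_of_m (u s : ℕ) (hu : 2 ≤ u) (hs1 : 1 ≤ s) (hs2 : s ≤ u - 1)
    (a : Fin u → ℤ) (hmono : Monotone a) (ha : ∀ j, 1 ≤ a j ∧ a j ≤ (s : ℤ)) (m : ℕ) :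
    Nval u s a m = Nval u s a 0 := by
  have h1 : 1 ≤ u := by omega
  rw [Nval_closed u s h1 hs1 a hmono ha m, Nval_closed u s h1 hs1 a hmono ha 0]
end

section
/- Fix integers u ≥ 2, 1 ≤ s ≤ u−1 and m ∈ ℕ, and set n = mu + s. Let h_c = m+1 for 0 ≤ c < s and h_c = m for s ≤ c ≤ u−1, let β_c = Σ_{c'=0}^{c} h_{c'} (so β_{u−1} = n), let F(i,j) = min(i,j) − ij/n ∈ ℚ for 0 ≤ i,j ≤ n, let d₀ = s·m(m+1) + (u−s)·m(m−1) + n − 1, and let Q = Σ_{i=1}^{n−1} Σ_{j=1}^{n−1} F(i,j) − (2n/u)·Σ_{i=1}^{n−1} Σ_{c=0}^{u−1} F(i, β_c) + (n/u)²·Σ_{c=0}^{u−1} Σ_{c'=0}^{u−1} F(β_c, β_{c'}). Then d₀ − (12u/n)·Q = −(s−1)(u−s−1)(u + us − s²)/u. In particular this quantity is independent of m. -/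
/-- Bottom-row box labels: `β_c = Σ_{c'=0}^{c} h_{c'}`. -/
def pyrB (s m : ℕ) (c : ℕ) : ℕ := ∑ c' ∈ Finset.range (c + 1), pyrH s m c'

lemma sum_cast_id_q (k : ℕ) : ∑ c ∈ Finset.range k, (c : ℚ) = (k : ℚ) * ((k : ℚ) - 1) / 2 := by
  induction k with
  | zero => simp
  | succ k ih => rw [Finset.sum_range_succ, ih]; push_cast; ring

lemma sum_poly_q (a b e : ℚ) (k : ℕ) :
    ∑ c ∈ Finset.range k, (a + b * (c : ℚ) + e * (c : ℚ) ^ 2)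
      = a * (k : ℚ) + b * ((k : ℚ) * ((k : ℚ) - 1) / 2)
        + e * ((k : ℚ) * ((k : ℚ) - 1) * (2 * (k : ℚ) - 1) / 6) := by
  induction k with
  | zero => simp
  | succ k ih => rw [Finset.sum_range_succ, ih]; push_cast; ring

lemma pyrB_eq (s m : ℕ) (hs : 1 ≤ s) (c : ℕ) :
    pyrB s m c = if c < s then (c + 1) * (m + 1) else (c + 1) * m + s := by
  induction c with
  | zero =>
    have h0 : 0 < s := hs
    simp [pyrB, pyrH, h0]
  | succ c ih =>
    have h : pyrB s m (c + 1) = pyrB s m c + pyrH s m (c + 1) :=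
      Finset.sum_range_succ _ _
    rw [h, ih]
    simp only [pyrH]
    rcases lt_trichotomy (c + 1) s with h1 | h1 | h1
    · rw [if_pos h1, if_pos (by omega), if_pos (by omega)]; ring
    · rw [if_pos (by omega), if_neg (by omega), if_neg (by omega)]; subst h1; ring
    · rw [if_neg (by omega), if_neg (by omega), if_neg (by omega)]; ring

lemma pyrB_cast (s m : ℕ) (hs : 1 ≤ s) (c : ℕ) :
    ((pyrB s m c : ℕ) : ℚ)
      = if c < s then ((c : ℚ) + 1) * ((m : ℚ) + 1) else ((c : ℚ) + 1) * (m : ℚ) + (s : ℚ) := by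
  rcases lt_or_ge c s with h | h
  · rw [pyrB_eq s m hs c, if_pos h, if_pos h]; push_cast; ring
  · rw [pyrB_eq s m hs c, if_neg (not_lt.mpr h), if_neg (not_lt.mpr h)]; push_cast; ring

lemma pyrB_mono (s m : ℕ) : Monotone (pyrB s m) := fun a b h =>
  Finset.sum_le_sum_of_subset (Finset.range_subset_range.mpr (by omega))

lemma pyrB_le (u s m : ℕ) (hs : 1 ≤ s) (hsu : s ≤ u - 1) (hu : 2 ≤ u) {c : ℕ} (hc : c < u) :
    pyrB s m c ≤ m * u + s := by
  have h1 : pyrB s m c ≤ pyrB s m (u - 1) := pyrB_mono s m (by omega)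
  have h2 : pyrB s m (u - 1) = m * u + s := by
    rw [pyrB_eq s m hs, if_neg (by omega)]
    have h3 : u - 1 + 1 = u := by omega
    rw [h3]; ring
  omega

lemma sum_Ico_one_q (n : ℕ) (hn : 0 < n) (f : ℕ → ℚ) (h0 : f 0 = 0) :
    ∑ i ∈ Finset.Ico 1 n, f i = ∑ i ∈ Finset.range n, f i := by
  rw [Finset.range_eq_Ico, Finset.sum_eq_sum_Ico_succ_bot hn, h0, zero_add]

lemma sumG (n b : ℕ) (hn : 0 < n) (hb : b ≤ n) :
    ∑ i ∈ Finset.Ico 1 n, (min (i : ℚ) (b : ℚ) - (i : ℚ) * (b : ℚ) / (n : ℚ))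
      = (b : ℚ) * ((n : ℚ) - (b : ℚ)) / 2 := by
  have hn' : (n : ℚ) ≠ 0 := Nat.cast_ne_zero.mpr hn.ne'
  rw [sum_Ico_one_q n hn _ (by simp)]
  have key : ∀ i ∈ Finset.range n,
      (min (i : ℚ) (b : ℚ) - (i : ℚ) * (b : ℚ) / (n : ℚ))
        = ((min i b : ℕ) : ℚ) - (i : ℚ) * (b : ℚ) / (n : ℚ) := by
    intro i _; rw [Nat.cast_min]
  rw [Finset.sum_congr rfl key, Finset.sum_sub_distrib]
  have h1 : ∑ i ∈ Finset.range n, ((min i b : ℕ) : ℚ)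
      = (∑ i ∈ Finset.range b, (i : ℚ)) + ((n : ℚ) - (b : ℚ)) * (b : ℚ) := by
    rw [← Finset.sum_range_add_sum_Ico _ hb]
    congr 1
    · exact Finset.sum_congr rfl fun i hi => by
        rw [min_eq_left (le_of_lt (Finset.mem_range.mp hi))]
    · rw [Finset.sum_congr rfl (fun i hi => by
          rw [min_eq_right (Finset.mem_Ico.mp hi).1]),
        Finset.sum_const, Nat.card_Ico, nsmul_eq_mul, Nat.cast_sub hb]
  have h2 : ∑ i ∈ Finset.range n, ((i : ℚ) * (b : ℚ) / (n : ℚ))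
      = (b : ℚ) / (n : ℚ) * ((n : ℚ) * ((n : ℚ) - 1) / 2) := by
    have e : ∑ i ∈ Finset.range n, ((i : ℚ) * (b : ℚ) / (n : ℚ))
        = ∑ i ∈ Finset.range n, ((b : ℚ) / (n : ℚ) * (i : ℚ)) :=
      Finset.sum_congr rfl fun i _ => by ring
    rw [e, ← Finset.mul_sum, sum_cast_id_q]
  rw [h1, h2, sum_cast_id_q]
  field_simp
  ring

lemma min_double (f : ℕ → ℚ) (u : ℕ) :
    ∑ c ∈ Finset.range u, ∑ c' ∈ Finset.range u, f (min c c')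
      = ∑ k ∈ Finset.range u, (2 * ((u : ℚ) - (k : ℚ)) - 1) * f k := by
  induction u with
  | zero => simp
  | succ u ih =>
    rw [Finset.sum_range_succ]
    have h1 : ∑ c ∈ Finset.range u, ∑ c' ∈ Finset.range (u + 1), f (min c c')
        = (∑ c ∈ Finset.range u, ∑ c' ∈ Finset.range u, f (min c c'))
          + ∑ c ∈ Finset.range u, f c := by
      rw [← Finset.sum_add_distrib]
      refine Finset.sum_congr rfl fun c hc => ?_
      rw [Finset.sum_range_succ, min_eq_left (le_of_lt (Finset.mem_range.mp hc))]
    have h2 : ∑ c' ∈ Finset.range (u + 1), f (min u c')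
        = (∑ c' ∈ Finset.range u, f c') + f u := by
      rw [Finset.sum_range_succ, min_self]
      congr 1
      exact Finset.sum_congr rfl fun c hc => by
        rw [min_eq_right (le_of_lt (Finset.mem_range.mp hc))]
    rw [h1, h2, ih, Finset.sum_range_succ]
    push_cast
    have h5 : ∑ k ∈ Finset.range u, (2 * ((u : ℚ) + 1 - (k : ℚ)) - 1) * f k
        = ∑ k ∈ Finset.range u, ((2 * ((u : ℚ) - (k : ℚ)) - 1) * f k + 2 * f k) :=
      Finset.sum_congr rfl fun k _ => by ring
    rw [h5, Finset.sum_add_distrib, ← Finset.mul_sum]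
    ring

lemma Bsum (u s m : ℕ) (hs : 1 ≤ s) (hsu : s ≤ u) :
    ∑ c ∈ Finset.range u, ((pyrB s m c : ℕ) : ℚ)
      = ((m : ℚ) + 1) * ((s : ℚ) * ((s : ℚ) - 1) / 2 + (s : ℚ))
        + (m : ℚ) * (((u : ℚ) * ((u : ℚ) - 1) / 2 - (s : ℚ) * ((s : ℚ) - 1) / 2)
            + ((u : ℚ) - (s : ℚ)))
        + (s : ℚ) * ((u : ℚ) - (s : ℚ)) := by
  rw [← Finset.sum_range_add_sum_Ico _ hsu]
  have e1 : ∑ c ∈ Finset.range s, ((pyrB s m c : ℕ) : ℚ)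
      = ∑ c ∈ Finset.range s, ((((m : ℚ) + 1)) + ((m : ℚ) + 1) * (c : ℚ) + 0 * (c : ℚ) ^ 2) :=
    Finset.sum_congr rfl fun c hc => by
      rw [pyrB_cast s m hs c, if_pos (Finset.mem_range.mp hc)]; ring
  have e2 : ∑ c ∈ Finset.Ico s u, ((pyrB s m c : ℕ) : ℚ)
      = ∑ c ∈ Finset.Ico s u, ((((m : ℚ) + (s : ℚ))) + (m : ℚ) * (c : ℚ) + 0 * (c : ℚ) ^ 2) :=
    Finset.sum_congr rfl fun c hc => by
      rw [pyrB_cast s m hs c, if_neg (not_lt.mpr (Finset.mem_Ico.mp hc).1)]; ring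
  rw [e1, e2, Finset.sum_Ico_eq_sub _ hsu, sum_poly_q, sum_poly_q, sum_poly_q]
  ring

lemma Bc (u s m : ℕ) (hs : 1 ≤ s) (hsu : s ≤ u) :
    ∑ c ∈ Finset.range u, (c : ℚ) * ((pyrB s m c : ℕ) : ℚ)
      = ((m : ℚ) + 1) * ((s : ℚ) * ((s : ℚ) - 1) * (2 * (s : ℚ) - 1) / 6
            + (s : ℚ) * ((s : ℚ) - 1) / 2)
        + (m : ℚ) * ((u : ℚ) * ((u : ℚ) - 1) * (2 * (u : ℚ) - 1) / 6
            - (s : ℚ) * ((s : ℚ) - 1) * (2 * (s : ℚ) - 1) / 6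
            + (u : ℚ) * ((u : ℚ) - 1) / 2 - (s : ℚ) * ((s : ℚ) - 1) / 2)
        + (s : ℚ) * ((u : ℚ) * ((u : ℚ) - 1) / 2 - (s : ℚ) * ((s : ℚ) - 1) / 2) := by
  rw [← Finset.sum_range_add_sum_Ico _ hsu]
  have e1 : ∑ c ∈ Finset.range s, (c : ℚ) * ((pyrB s m c : ℕ) : ℚ)
      = ∑ c ∈ Finset.range s,
          ((0 : ℚ) + ((m : ℚ) + 1) * (c : ℚ) + ((m : ℚ) + 1) * (c : ℚ) ^ 2) :=
    Finset.sum_congr rfl fun c hc => by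
      rw [pyrB_cast s m hs c, if_pos (Finset.mem_range.mp hc)]; ring
  have e2 : ∑ c ∈ Finset.Ico s u, (c : ℚ) * ((pyrB s m c : ℕ) : ℚ)
      = ∑ c ∈ Finset.Ico s u,
          ((0 : ℚ) + ((m : ℚ) + (s : ℚ)) * (c : ℚ) + (m : ℚ) * (c : ℚ) ^ 2) :=
    Finset.sum_congr rfl fun c hc => by
      rw [pyrB_cast s m hs c, if_neg (not_lt.mpr (Finset.mem_Ico.mp hc).1)]; ring
  rw [e1, e2, Finset.sum_Ico_eq_sub _ hsu, sum_poly_q, sum_poly_q, sum_poly_q]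
  ring

lemma Bsq (u s m : ℕ) (hs : 1 ≤ s) (hsu : s ≤ u) :
    ∑ c ∈ Finset.range u, ((pyrB s m c : ℕ) : ℚ) ^ 2
      = ((m : ℚ) + 1) ^ 2 * ((s : ℚ) * ((s : ℚ) - 1) * (2 * (s : ℚ) - 1) / 6
            + 2 * ((s : ℚ) * ((s : ℚ) - 1) / 2) + (s : ℚ))
        + (m : ℚ) ^ 2 * ((u : ℚ) * ((u : ℚ) - 1) * (2 * (u : ℚ) - 1) / 6
            - (s : ℚ) * ((s : ℚ) - 1) * (2 * (s : ℚ) - 1) / 6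
            + 2 * ((u : ℚ) * ((u : ℚ) - 1) / 2 - (s : ℚ) * ((s : ℚ) - 1) / 2)
            + ((u : ℚ) - (s : ℚ)))
        + 2 * (m : ℚ) * (s : ℚ) * ((u : ℚ) * ((u : ℚ) - 1) / 2
            - (s : ℚ) * ((s : ℚ) - 1) / 2 + ((u : ℚ) - (s : ℚ)))
        + (s : ℚ) ^ 2 * ((u : ℚ) - (s : ℚ)) := by
  rw [← Finset.sum_range_add_sum_Ico _ hsu]
  have e1 : ∑ c ∈ Finset.range s, ((pyrB s m c : ℕ) : ℚ) ^ 2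
      = ∑ c ∈ Finset.range s,
          (((m : ℚ) + 1) ^ 2 + 2 * ((m : ℚ) + 1) ^ 2 * (c : ℚ)
            + ((m : ℚ) + 1) ^ 2 * (c : ℚ) ^ 2) :=
    Finset.sum_congr rfl fun c hc => by
      rw [pyrB_cast s m hs c, if_pos (Finset.mem_range.mp hc)]; ring
  have e2 : ∑ c ∈ Finset.Ico s u, ((pyrB s m c : ℕ) : ℚ) ^ 2
      = ∑ c ∈ Finset.Ico s u,
          (((m : ℚ) + (s : ℚ)) ^ 2 + 2 * (m : ℚ) * ((m : ℚ) + (s : ℚ)) * (c : ℚ)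
            + (m : ℚ) ^ 2 * (c : ℚ) ^ 2) :=
    Finset.sum_congr rfl fun c hc => by
      rw [pyrB_cast s m hs c, if_neg (not_lt.mpr (Finset.mem_Ico.mp hc).1)]; ring
  rw [e1, e2, Finset.sum_Ico_eq_sub _ hsu, sum_poly_q, sum_poly_q, sum_poly_q]
  ring

/-- Proposition 4.27: with `n = mu + s`, `F(i,j) = min(i,j) - ij/n` the Gram
matrix of fundamental weights of `sl_n`, `d₀ = s·m(m+1) + (u-s)·m(m-1) + n - 1 = dim g₀` and
`Q = Σ_{i,j=1}^{n-1} F(i,j) - (2n/u)·Σ_{i=1}^{n-1} Σ_{c<u} F(i,β_c)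
  + (n/u)²·Σ_{c,c'<u} F(β_c,β_{c'}) = |ρ - (n/u)x₀|²`, the central charge
`d₀ - (12u/n)·Q` equals `-(s-1)(u-s-1)(u+us-s²)/u`; in particular it is independent of `m`. -/
theorem central_charge_formula (u s m : ℕ) (hu : 2 ≤ u) (hs1 : 1 ≤ s) (hs2 : s ≤ u - 1) :
    ((s : ℚ) * (m : ℚ) * ((m : ℚ) + 1) + ((u : ℚ) - (s : ℚ)) * (m : ℚ) * ((m : ℚ) - 1)
        + ((m * u + s : ℕ) : ℚ) - 1)
      - (12 * (u : ℚ) / ((m * u + s : ℕ) : ℚ)) *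
        ((∑ i ∈ Finset.Ico 1 (m * u + s), ∑ j ∈ Finset.Ico 1 (m * u + s),
            (min (i : ℚ) (j : ℚ) - (i : ℚ) * (j : ℚ) / ((m * u + s : ℕ) : ℚ)))
          - (2 * ((m * u + s : ℕ) : ℚ) / (u : ℚ)) *
            (∑ i ∈ Finset.Ico 1 (m * u + s), ∑ c ∈ Finset.range u,
              (min (i : ℚ) ((pyrB s m c : ℕ) : ℚ)
                - (i : ℚ) * ((pyrB s m c : ℕ) : ℚ) / ((m * u + s : ℕ) : ℚ)))
          + (((m * u + s : ℕ) : ℚ) / (u : ℚ)) ^ 2 *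
            (∑ c ∈ Finset.range u, ∑ c' ∈ Finset.range u,
              (min ((pyrB s m c : ℕ) : ℚ) ((pyrB s m c' : ℕ) : ℚ)
                - ((pyrB s m c : ℕ) : ℚ) * ((pyrB s m c' : ℕ) : ℚ) / ((m * u + s : ℕ) : ℚ))))
      = -(((s : ℚ) - 1) * ((u : ℚ) - (s : ℚ) - 1)
          * ((u : ℚ) + (u : ℚ) * (s : ℚ) - (s : ℚ) ^ 2)) / (u : ℚ) := by
  have hsu : s ≤ u := le_trans hs2 (Nat.sub_le u 1)
  have hn0 : 0 < m * u + s := by omega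
  have hnQ : ((m * u + s : ℕ) : ℚ) ≠ 0 := Nat.cast_ne_zero.mpr hn0.ne'
  have huQ : (u : ℚ) ≠ 0 := Nat.cast_ne_zero.mpr (by omega)
  -- Term 1
  have hT1 : ∑ i ∈ Finset.Ico 1 (m * u + s), ∑ j ∈ Finset.Ico 1 (m * u + s),
      (min (i : ℚ) (j : ℚ) - (i : ℚ) * (j : ℚ) / ((m * u + s : ℕ) : ℚ))
      = ((m * u + s : ℕ) : ℚ) * (((m * u + s : ℕ) : ℚ) - 1) * (((m * u + s : ℕ) : ℚ) + 1) / 12 := by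
    have inner : ∀ i ∈ Finset.Ico 1 (m * u + s),
        ∑ j ∈ Finset.Ico 1 (m * u + s),
          (min (i : ℚ) (j : ℚ) - (i : ℚ) * (j : ℚ) / ((m * u + s : ℕ) : ℚ))
          = (i : ℚ) * (((m * u + s : ℕ) : ℚ) - (i : ℚ)) / 2 := by
      intro i hi
      have hi' := Finset.mem_Ico.mp hi
      have step : ∀ j ∈ Finset.Ico 1 (m * u + s),
          (min (i : ℚ) (j : ℚ) - (i : ℚ) * (j : ℚ) / ((m * u + s : ℕ) : ℚ))
            = (min (j : ℚ) (i : ℚ) - (j : ℚ) * (i : ℚ) / ((m * u + s : ℕ) : ℚ)) := by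
        intro j _; rw [min_comm]; ring
      rw [Finset.sum_congr rfl step, sumG (m * u + s) i hn0 (le_of_lt hi'.2)]
    rw [Finset.sum_congr rfl inner]
    rw [sum_Ico_one_q (m * u + s) hn0 _ (by simp)]
    have poly : ∀ i ∈ Finset.range (m * u + s),
        (i : ℚ) * (((m * u + s : ℕ) : ℚ) - (i : ℚ)) / 2
          = (0 : ℚ) + (((m * u + s : ℕ) : ℚ) / 2) * (i : ℚ) + (-(1 : ℚ) / 2) * (i : ℚ) ^ 2 := by
      intro i _; ring
    rw [Finset.sum_congr rfl poly, sum_poly_q]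
    ring
  -- Term 2
  have hT2 : ∑ i ∈ Finset.Ico 1 (m * u + s), ∑ c ∈ Finset.range u,
      (min (i : ℚ) ((pyrB s m c : ℕ) : ℚ)
        - (i : ℚ) * ((pyrB s m c : ℕ) : ℚ) / ((m * u + s : ℕ) : ℚ))
      = (((m * u + s : ℕ) : ℚ) / 2) * (∑ c ∈ Finset.range u, ((pyrB s m c : ℕ) : ℚ))
        - (1 / 2) * (∑ c ∈ Finset.range u, ((pyrB s m c : ℕ) : ℚ) ^ 2) := by
    rw [Finset.sum_comm]
    have step : ∀ c ∈ Finset.range u,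
        ∑ i ∈ Finset.Ico 1 (m * u + s),
          (min (i : ℚ) ((pyrB s m c : ℕ) : ℚ)
            - (i : ℚ) * ((pyrB s m c : ℕ) : ℚ) / ((m * u + s : ℕ) : ℚ))
          = (((m * u + s : ℕ) : ℚ) / 2) * ((pyrB s m c : ℕ) : ℚ)
            - (1 / 2) * ((pyrB s m c : ℕ) : ℚ) ^ 2 := by
      intro c hc
      rw [sumG (m * u + s) (pyrB s m c) hn0
        (pyrB_le u s m hs1 hs2 hu (Finset.mem_range.mp hc))]
      ring
    rw [Finset.sum_congr rfl step, Finset.sum_sub_distrib, ← Finset.mul_sum, ← Finset.mul_sum]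
  -- Term 3
  have hmin : ∀ c c', min ((pyrB s m c : ℕ) : ℚ) ((pyrB s m c' : ℕ) : ℚ)
      = ((pyrB s m (min c c') : ℕ) : ℚ) := by
    intro c c'
    rw [← Nat.cast_min]
    congr 1
    exact ((pyrB_mono s m).map_min).symm
  have hT3 : ∑ c ∈ Finset.range u, ∑ c' ∈ Finset.range u,
      (min ((pyrB s m c : ℕ) : ℚ) ((pyrB s m c' : ℕ) : ℚ)
        - ((pyrB s m c : ℕ) : ℚ) * ((pyrB s m c' : ℕ) : ℚ) / ((m * u + s : ℕ) : ℚ))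
      = ((2 * (u : ℚ) - 1) * (∑ c ∈ Finset.range u, ((pyrB s m c : ℕ) : ℚ))
          - 2 * (∑ c ∈ Finset.range u, (c : ℚ) * ((pyrB s m c : ℕ) : ℚ)))
        - (∑ c ∈ Finset.range u, ((pyrB s m c : ℕ) : ℚ))
          * (∑ c ∈ Finset.range u, ((pyrB s m c : ℕ) : ℚ)) / ((m * u + s : ℕ) : ℚ) := by
    have split : ∀ c ∈ Finset.range u, ∑ c' ∈ Finset.range u,
        (min ((pyrB s m c : ℕ) : ℚ) ((pyrB s m c' : ℕ) : ℚ)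
          - ((pyrB s m c : ℕ) : ℚ) * ((pyrB s m c' : ℕ) : ℚ) / ((m * u + s : ℕ) : ℚ))
        = (∑ c' ∈ Finset.range u, ((pyrB s m (min c c') : ℕ) : ℚ))
          - (∑ c' ∈ Finset.range u,
              ((pyrB s m c : ℕ) : ℚ) * ((pyrB s m c' : ℕ) : ℚ) / ((m * u + s : ℕ) : ℚ)) := by
      intro c _
      rw [← Finset.sum_sub_distrib]
      exact Finset.sum_congr rfl fun c' _ => by rw [hmin]
    rw [Finset.sum_congr rfl split, Finset.sum_sub_distrib]
    have p1 : ∑ c ∈ Finset.range u, ∑ c' ∈ Finset.range u, ((pyrB s m (min c c') : ℕ) : ℚ)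
        = (2 * (u : ℚ) - 1) * (∑ c ∈ Finset.range u, ((pyrB s m c : ℕ) : ℚ))
          - 2 * (∑ c ∈ Finset.range u, (c : ℚ) * ((pyrB s m c : ℕ) : ℚ)) := by
      rw [min_double (fun k => ((pyrB s m k : ℕ) : ℚ)) u]
      have expand : ∀ k ∈ Finset.range u,
          (2 * ((u : ℚ) - (k : ℚ)) - 1) * ((pyrB s m k : ℕ) : ℚ)
            = (2 * (u : ℚ) - 1) * ((pyrB s m k : ℕ) : ℚ)
              - 2 * ((k : ℚ) * ((pyrB s m k : ℕ) : ℚ)) := by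
        intro k _; ring
      rw [Finset.sum_congr rfl expand, Finset.sum_sub_distrib, ← Finset.mul_sum,
        ← Finset.mul_sum]
    have p2 : ∑ c ∈ Finset.range u, ∑ c' ∈ Finset.range u,
        ((pyrB s m c : ℕ) : ℚ) * ((pyrB s m c' : ℕ) : ℚ) / ((m * u + s : ℕ) : ℚ)
        = (∑ c ∈ Finset.range u, ((pyrB s m c : ℕ) : ℚ))
          * (∑ c ∈ Finset.range u, ((pyrB s m c : ℕ) : ℚ)) / ((m * u + s : ℕ) : ℚ) := by
      rw [Finset.sum_mul, Finset.sum_div]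
      refine Finset.sum_congr rfl fun c _ => ?_
      rw [Finset.mul_sum, Finset.sum_div]
    rw [p1, p2]
  rw [hT1, hT2, hT3, Bsum u s m hs1 hsu, Bc u s m hs1 hsu, Bsq u s m hs1 hsu]
  push_cast
  push_cast at hnQ
  field_simp
  ring
end

section
/- Fix integers u ≥ 2, 1 ≤ s ≤ u−1, m ≥ 1, and n = mu + s. Let P = {(c,k) : 0 ≤ c < u, 0 ≤ k < h_c} where h_c = m+1 if c < s and h_c = m otherwise, and let g₀ be the complex Lie algebra of trace-zero P × P matrices A with A_{pq} = 0 unless p and q have the same first coordinate (block-diagonal trace-zero matrices, a Lie subalgebra of sl_n(ℂ)). Let x, y ∈ g₀ be diagonal matrices whose entries depend only on the second coordinate: x_{(c,k)} = ξ_k and y_{(c,k)} = η_k for some ξ, η with Σ_{(c,k) ∈ P} ξ_k = Σ_{(c,k) ∈ P} η_k = 0. Then the Killing form of g₀ satisfies κ_{g₀}(x, y) = (2n/u)·Σ_{p ∈ P} x_p y_p, where κ_{g₀}(x,y) is the trace on g₀ of (ad x)∘(ad y). -/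
attribute [local instance 100] LieRing.ofAssociativeRing

/-- The boxes of the left-adjusted pyramid of the partition `[u^m, s]`: pairs `(c, k)` with
column `c < u` and row `k < h_c`, where `h_c = m+1` if `c < s` and `h_c = m` otherwise. -/
abbrev PyrIdx (u s m : ℕ) :=
  {p : Fin u × Fin (m + 1) // (p.2 : ℕ) < if (p.1 : ℕ) < s then m + 1 else m}

/-- The degree-zero subalgebra `g₀` of `sl_n(ℂ)` (`n = mu + s`) for the good grading attached
to the left-adjusted pyramid of `[u^m, s]`: trace-zero matrices indexed by the boxes of the
pyramid which vanish off the column-diagonal blocks. -/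
def g0 (u s m : ℕ) : LieSubalgebra ℂ (Matrix (PyrIdx u s m) (PyrIdx u s m) ℂ) where
  carrier := {A | Matrix.trace A = 0 ∧ ∀ p q : PyrIdx u s m, p.1.1 ≠ q.1.1 → A p q = 0}
  add_mem' := fun {A B} ha hb =>
    ⟨by simp [Matrix.trace_add, ha.1, hb.1],
      fun p q h => by simp [Matrix.add_apply, ha.2 p q h, hb.2 p q h]⟩
  zero_mem' := ⟨by simp, fun p q h => by simp⟩
  smul_mem' := fun c {A} ha =>
    ⟨by simp [Matrix.trace_smul, ha.1], fun p q h => by simp [Matrix.smul_apply, ha.2 p q h]⟩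
  lie_mem' := fun {A B} ha hb => by
    refine ⟨?_, fun p q h => ?_⟩
    · rw [Ring.lie_def, Matrix.trace_sub, Matrix.trace_mul_comm, sub_self]
    · rw [Ring.lie_def]
      simp only [Matrix.sub_apply, Matrix.mul_apply]
      have h1 : (∑ r : PyrIdx u s m, A p r * B r q) = 0 :=
        Finset.sum_eq_zero fun r _ => by
          by_cases hpr : p.1.1 = r.1.1
          · rw [hb.2 r q fun hrq => h (hpr.trans hrq), mul_zero]
          · rw [ha.2 p r hpr, zero_mul]
      have h2 : (∑ r : PyrIdx u s m, B p r * A r q) = 0 :=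
        Finset.sum_eq_zero fun r _ => by
          by_cases hpr : p.1.1 = r.1.1
          · rw [ha.2 r q fun hrq => h (hpr.trans hrq), mul_zero]
          · rw [hb.2 p r hpr, zero_mul]
      rw [h1, h2, sub_zero]


open Matrix LinearMap LieAlgebra

private theorem double_sum_aux (v : Type) [Fintype v] (a b : v → ℂ) :
    ∑ k : v, ∑ l : v, (a k - a l) * (b k - b l)
      = 2*(Fintype.card v)*(∑ k, a k * b k) - 2*(∑ k, a k)*(∑ k, b k) := by
  have h : ∀ k : v, ∑ l : v, (a k - a l) * (b k - b l)
      = (Fintype.card v) * (a k * b k) + (∑ l, a l * b l)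
        - (a k * (∑ l, b l) + (∑ l, a l) * b k) := by
    intro k
    have h2 : ∀ l : v, (a k - a l)*(b k - b l) = a k*b k + a l*b l - (a k*b l + a l*b k) := by
      intros; ring
    simp_rw [h2, Finset.sum_sub_distrib, Finset.sum_add_distrib, Finset.sum_const,
      ← Finset.mul_sum, ← Finset.sum_mul, Finset.card_univ, nsmul_eq_mul]
  simp_rw [h, Finset.sum_sub_distrib, Finset.sum_add_distrib, Finset.sum_const,
    ← Finset.mul_sum, ← Finset.sum_mul, Finset.card_univ, nsmul_eq_mul]
  ring

private theorem sum_pyr (u s m : ℕ) (F : Fin u × Fin (m+1) → ℂ) :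
    ∑ p : PyrIdx u s m, F p.1
      = ∑ c : Fin u, ∑ k : Fin (m+1),
          if (k:ℕ) < (if (c:ℕ) < s then m+1 else m) then F (c,k) else 0 := by
  classical
  have h1 : (∑ c : Fin u, ∑ k : Fin (m+1),
          if (k:ℕ) < (if (c:ℕ) < s then m+1 else m) then F (c,k) else 0)
      = ∑ a : Fin u × Fin (m+1),
          if (a.2:ℕ) < (if (a.1:ℕ) < s then m+1 else m) then F a else 0 :=
    (Fintype.sum_prod_type
      (f := fun a : Fin u × Fin (m+1) =>
        if (a.2:ℕ) < (if (a.1:ℕ) < s then m+1 else m) then F a else 0)).symm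
  rw [h1, ← Finset.sum_filter]
  exact (Finset.sum_subtype _ (by simp) _).symm

private theorem if_lt_m_sum (m : ℕ) (φ : Fin (m+1) → ℂ) :
    ∑ k : Fin (m+1), (if (k:ℕ) < m then φ k else 0) = ∑ k : Fin m, φ k.castSucc := by
  rw [Fin.sum_univ_castSucc (f := fun k => if (k:ℕ) < m then φ k else 0)]
  simp

private theorem card_filter_lt_fin (u s : ℕ) (hsu : s < u) :
    (Finset.univ.filter fun c : Fin u => (c:ℕ) < s).card = s := by
  have h1 : (Finset.univ.filter fun c : Fin u => (c:ℕ) < s)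
      = Finset.Iio (⟨s, hsu⟩ : Fin u) := by
    ext c; simp [Fin.lt_def]
  rw [h1, Fin.card_Iio]

private theorem sum_ite_col (u s : ℕ) (hsu : s < u) (A B : ℂ) :
    ∑ c : Fin u, (if (c:ℕ) < s then A else B) = (s:ℂ)*(A-B) + (u:ℂ)*B := by
  have h : ∀ c : Fin u, (if (c:ℕ) < s then A else B)
      = (if (c:ℕ) < s then A - B else 0) + B := by
    intro c; split <;> ring
  simp_rw [h]
  rw [Finset.sum_add_distrib, Finset.sum_const, Finset.card_univ, Fintype.card_fin,
    ← Finset.sum_filter, Finset.sum_const, card_filter_lt_fin u s hsu]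
  simp [nsmul_eq_mul]

private theorem sum_pyr_row (u s m : ℕ) (hsu : s < u) (φ : Fin (m+1) → ℂ) :
    ∑ p : PyrIdx u s m, φ p.1.2
      = (s:ℂ) * φ (Fin.last m) + (u:ℂ) * ((∑ k : Fin m, φ k.castSucc)) := by
  rw [sum_pyr u s m (fun a => φ a.2)]
  have hinner : ∀ c : Fin u,
      (∑ k : Fin (m+1), if (k:ℕ) < (if (c:ℕ) < s then m+1 else m) then φ k else 0)
        = if (c:ℕ) < s then (∑ k : Fin (m+1), φ k) else (∑ k : Fin m, φ k.castSucc) := by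
    intro c
    by_cases hc : (c:ℕ) < s
    · simp [hc, Fin.is_lt, Fin.is_le]
    · rw [if_neg hc, if_neg hc]
      exact if_lt_m_sum m φ
  simp_rw [hinner]
  rw [sum_ite_col u s hsu]
  rw [Fin.sum_univ_castSucc (f := φ)]
  ring

private theorem double_pyr (u s m : ℕ) (hsu : s < u) (ξ η : Fin (m+1) → ℂ) :
    (∑ pq : PyrIdx u s m × PyrIdx u s m,
      if pq.1.1.1 = pq.2.1.1
      then (ξ pq.1.1.2 - ξ pq.2.1.2) * (η pq.1.1.2 - η pq.2.1.2) else 0)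
    = (s:ℂ)*((∑ k : Fin (m+1), ∑ l : Fin (m+1), (ξ k - ξ l)*(η k - η l))
          - (∑ k : Fin m, ∑ l : Fin m,
              (ξ k.castSucc - ξ l.castSucc)*(η k.castSucc - η l.castSucc)))
      + (u:ℂ)*(∑ k : Fin m, ∑ l : Fin m,
              (ξ k.castSucc - ξ l.castSucc)*(η k.castSucc - η l.castSucc)) := by
  classical
  have hprod := Fintype.sum_prod_type
    (f := fun pq : PyrIdx u s m × PyrIdx u s m =>
      if pq.1.1.1 = pq.2.1.1
      then (ξ pq.1.1.2 - ξ pq.2.1.2) * (η pq.1.1.2 - η pq.2.1.2) else 0)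
  rw [hprod]
  have houter := sum_pyr u s m
    (fun a => ∑ q : PyrIdx u s m,
      if a.1 = q.1.1 then (ξ a.2 - ξ q.1.2) * (η a.2 - η q.1.2) else 0)
  rw [houter]
  have hG : ∀ (c : Fin u) (k : Fin (m+1)),
      (∑ q : PyrIdx u s m, if c = q.1.1 then (ξ k - ξ q.1.2)*(η k - η q.1.2) else 0)
        = ∑ l : Fin (m+1), if (l:ℕ) < (if (c:ℕ) < s then m+1 else m)
            then (ξ k - ξ l)*(η k - η l) else 0 := by
    intro c k
    rw [sum_pyr u s m (fun a => if c = a.1 then (ξ k - ξ a.2)*(η k - η a.2) else 0)]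
    rw [Finset.sum_eq_single c]
    · refine Finset.sum_congr rfl fun l _ => ?_
      rw [if_pos rfl]
    · intro c' _ hc'
      refine Finset.sum_eq_zero fun l _ => ?_
      have hfalse : ¬ c = c' := fun h => hc' h.symm
      simp [hfalse]
    · intro h
      exact absurd (Finset.mem_univ c) h
  have hsplit : ∀ c : Fin u,
      (∑ k : Fin (m+1), if (k:ℕ) < (if (c:ℕ) < s then m+1 else m)
        then (∑ q : PyrIdx u s m, if c = q.1.1 then (ξ k - ξ q.1.2)*(η k - η q.1.2) else 0)
        else 0)
      = if (c:ℕ) < s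
        then (∑ k : Fin (m+1), ∑ l : Fin (m+1), (ξ k - ξ l)*(η k - η l))
        else (∑ k : Fin m, ∑ l : Fin m,
              (ξ k.castSucc - ξ l.castSucc)*(η k.castSucc - η l.castSucc)) := by
    intro c
    simp_rw [hG c]
    by_cases hc : (c:ℕ) < s
    · rw [if_pos hc]
      simp_rw [if_pos hc]
      refine Finset.sum_congr rfl fun k _ => ?_
      rw [if_pos k.is_lt]
      exact Finset.sum_congr rfl fun l _ => by rw [if_pos l.is_lt]
    · rw [if_neg hc]
      simp_rw [if_neg hc]
      rw [if_lt_m_sum m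
        (fun k => ∑ l : Fin (m+1), if (l:ℕ) < m then (ξ k - ξ l)*(η k - η l) else 0)]
      exact Finset.sum_congr rfl fun k _ =>
        if_lt_m_sum m (fun l => (ξ k.castSucc - ξ l)*(η k.castSucc - η l))
  simp_rw [hsplit]
  rw [sum_ite_col u s hsu]

private theorem final_algebra (u s m : ℕ) (hu : 0 < u) (Q' e f Sξ Sη : ℂ)
    (h1 : (s:ℂ)*e + (u:ℂ)*Sξ = 0) (h2 : (s:ℂ)*f + (u:ℂ)*Sη = 0) :
    (s:ℂ)*((2*((m:ℂ)+1)*(Q'+e*f) - 2*(Sξ+e)*(Sη+f)) - (2*(m:ℂ)*Q' - 2*Sξ*Sη))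
      + (u:ℂ)*(2*(m:ℂ)*Q' - 2*Sξ*Sη)
    = (2*((m*u+s : ℕ):ℂ)/(u:ℂ)) * ((s:ℂ)*(e*f) + (u:ℂ)*Q') := by
  have hu' : (u:ℂ) ≠ 0 := Nat.cast_ne_zero.2 hu.ne'
  have hS : Sξ = -((s:ℂ)*e)/u := by
    field_simp
    linear_combination h1
  have hS' : Sη = -((s:ℂ)*f)/u := by
    field_simp
    linear_combination h2
  rw [hS, hS']
  push_cast
  field_simp
  ring

private def blockProj (u s m : ℕ) :
    Matrix (PyrIdx u s m) (PyrIdx u s m) ℂ →ₗ[ℂ] Matrix (PyrIdx u s m) (PyrIdx u s m) ℂ where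
  toFun A := Matrix.of fun p q => if p.1.1 = q.1.1 then A p q else 0
  map_add' A B := by
    ext p q
    by_cases h : p.1.1 = q.1.1 <;> simp [h]
  map_smul' c A := by
    ext p q
    by_cases h : p.1.1 = q.1.1 <;> simp [h]

private lemma lie_diagonal (u s m : ℕ) (d : PyrIdx u s m → ℂ)
    (A : Matrix (PyrIdx u s m) (PyrIdx u s m) ℂ) :
    ⁅Matrix.diagonal d, A⁆ = Matrix.of fun i j => (d i - d j) * A i j := by
  ext i j
  simp [Ring.lie_def, Matrix.diagonal_mul, Matrix.mul_diagonal, Matrix.sub_apply]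
  ring

private noncomputable def proj0 (u s m : ℕ) :
    Matrix (PyrIdx u s m) (PyrIdx u s m) ℂ →ₗ[ℂ] Matrix (PyrIdx u s m) (PyrIdx u s m) ℂ :=
  blockProj u s m - ((Fintype.card (PyrIdx u s m) : ℂ))⁻¹ •
    ((Matrix.traceLinearMap (PyrIdx u s m) ℂ ℂ).smulRight
      (1 : Matrix (PyrIdx u s m) (PyrIdx u s m) ℂ))

private theorem killing_eq (u s m : ℕ) (hu : 2 ≤ u) (hs1 : 1 ≤ s)
    (ξ η : Fin (m + 1) → ℂ)
    (x y : ↥(g0 u s m))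
    (hx : (x : Matrix (PyrIdx u s m) (PyrIdx u s m) ℂ) = Matrix.diagonal fun p => ξ p.1.2)
    (hy : (y : Matrix (PyrIdx u s m) (PyrIdx u s m) ℂ) = Matrix.diagonal fun p => η p.1.2) :
    killingForm ℂ ↥(g0 u s m) x y
      = ∑ pq : PyrIdx u s m × PyrIdx u s m,
          if pq.1.1.1 = pq.2.1.1
          then (ξ pq.1.1.2 - ξ pq.2.1.2) * (η pq.1.1.2 - η pq.2.1.2) else 0 := by
  classical
  haveI hne : Nonempty (PyrIdx u s m) :=
    ⟨⟨(⟨0, by omega⟩, ⟨0, by omega⟩), by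
      dsimp only
      rw [if_pos (by omega)]
      omega⟩⟩
  set Mat := Matrix (PyrIdx u s m) (PyrIdx u s m) ℂ
  have hNne : ((Fintype.card (PyrIdx u s m) : ℂ)) ≠ 0 := by
    exact_mod_cast Nat.cast_ne_zero.2 Fintype.card_ne_zero
  set π := proj0 u s m with hπ
  set T : Mat →ₗ[ℂ] Mat := (ad ℂ Mat (↑x : Mat)) ∘ₗ (ad ℂ Mat (↑y : Mat)) with hT
  set F : Mat →ₗ[ℂ] Mat := T ∘ₗ π with hF
  -- π A ∈ g0 for all A
  have hπ_mem : ∀ A : Mat, π A ∈ g0 u s m := by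
    intro A
    constructor
    · show Matrix.trace (π A) = 0
      have : π A = blockProj u s m A - ((Fintype.card (PyrIdx u s m) : ℂ))⁻¹ • (Matrix.trace A • 1) := rfl
      rw [this, Matrix.trace_sub, Matrix.trace_smul, Matrix.trace_smul, Matrix.trace_one]
      have hb : Matrix.trace (blockProj u s m A) = Matrix.trace A := by
        unfold Matrix.trace
        refine Finset.sum_congr rfl fun p _ => ?_
        simp [blockProj, Matrix.diag]
      rw [hb]
      simp only [smul_eq_mul]
      field_simp
      ring
    · intro p q h
      have : π A p q = (if p.1.1 = q.1.1 then A p q else 0)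
          - ((Fintype.card (PyrIdx u s m) : ℂ))⁻¹ • (Matrix.trace A • (1 : Mat)) p q := rfl
      rw [this, if_neg h]
      have hpq : p ≠ q := fun hh => h (by rw [hh])
      rw [Matrix.smul_apply, Matrix.one_apply_ne hpq, smul_zero]
      simp
  -- π fixes g0
  have hπ_fix : ∀ A : Mat, A ∈ g0 u s m → π A = A := by
    intro A hA
    have : π A = blockProj u s m A - ((Fintype.card (PyrIdx u s m) : ℂ))⁻¹ • (Matrix.trace A • 1) := rfl
    rw [this, hA.1]
    ext p q
    by_cases h : p.1.1 = q.1.1 <;>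
      simp [blockProj, h, hA.2 p q]
  have hF_mem : ∀ A : Mat, F A ∈ (g0 u s m : Submodule ℂ Mat) := by
    intro A
    have : F A = ⁅(↑x : Mat), ⁅(↑y : Mat), π A⁆⁆ := rfl
    rw [this]
    exact (g0 u s m).lie_mem x.2 ((g0 u s m).lie_mem y.2 (hπ_mem A))
  have hF_mem' : ∀ A ∈ (g0 u s m : Submodule ℂ Mat), F A ∈ (g0 u s m : Submodule ℂ Mat) :=
    fun A _ => hF_mem A
  have heq : (ad ℂ ↥(g0 u s m) x ∘ₗ ad ℂ ↥(g0 u s m) y) = F.restrict hF_mem' := by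
    refine LinearMap.ext fun z => Subtype.ext ?_
    have hz : π (↑z : Mat) = ↑z := hπ_fix _ z.2
    simp only [LinearMap.comp_apply]
    calc (↑(((ad ℂ ↥(g0 u s m)) x) (((ad ℂ ↥(g0 u s m)) y) z)) : Mat)
        = ⁅(↑x : Mat), ⁅(↑y : Mat), (↑z : Mat)⁆⁆ := by
          rw [ad_apply, ad_apply, LieSubalgebra.coe_bracket, LieSubalgebra.coe_bracket]
      _ = F (↑z : Mat) := by
          rw [hF, hT]
          simp only [LinearMap.comp_apply, ad_apply]
          rw [hπ] at hz
          rw [hz]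
      _ = ↑((F.restrict hF_mem') z) := (LinearMap.restrict_coe_apply F hF_mem' z).symm
  have key1 : killingForm ℂ ↥(g0 u s m) x y = LinearMap.trace ℂ Mat F := by
    rw [killingForm_apply_apply, heq]
    exact LinearMap.trace_restrict_eq_of_forall_mem _ _ hF_mem hF_mem'
  -- T applied entrywise
  have hT1 : ∀ A : Mat, T A = Matrix.of fun i j =>
      (ξ i.1.2 - ξ j.1.2) * ((η i.1.2 - η j.1.2) * A i j) := by
    intro A
    rw [hT]
    simp only [LinearMap.comp_apply, ad_apply]
    rw [hy, lie_diagonal, hx, lie_diagonal]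
    rfl
  have hT1zero : T (1 : Mat) = 0 := by
    rw [hT1]
    ext i j
    by_cases h : i = j
    · subst h
      simp only [Matrix.of_apply, Matrix.one_apply_eq, sub_self, zero_mul, mul_zero]
      rfl
    · simp only [Matrix.of_apply, Matrix.one_apply_ne h, mul_zero]
      rfl
  have hF_apply : ∀ A : Mat, F A = T (blockProj u s m A) := by
    intro A
    rw [hF]
    simp only [LinearMap.comp_apply]
    have hπA : π A = blockProj u s m A
        - ((Fintype.card (PyrIdx u s m) : ℂ))⁻¹ • (Matrix.trace A • (1 : Mat)) := rfl
    rw [hπA, map_sub, T.map_smul, T.map_smul, hT1zero]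
    simp
  set c : PyrIdx u s m × PyrIdx u s m → ℂ := fun pq =>
    if pq.1.1.1 = pq.2.1.1
    then (ξ pq.1.1.2 - ξ pq.2.1.2) * (η pq.1.1.2 - η pq.2.1.2) else 0 with hc
  have heig : ∀ i : PyrIdx u s m × PyrIdx u s m,
      F (Matrix.stdBasis ℂ (PyrIdx u s m) (PyrIdx u s m) i)
        = c i • Matrix.stdBasis ℂ (PyrIdx u s m) (PyrIdx u s m) i := by
    rintro ⟨p, q⟩
    rw [Matrix.stdBasis_eq_single, hF_apply]
    by_cases h : p.1.1 = q.1.1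
    · have hb : blockProj u s m (Matrix.single p q (1:ℂ)) = Matrix.single p q 1 := by
        ext i j
        show (if i.1.1 = j.1.1 then Matrix.single p q (1:ℂ) i j else 0) = _
        by_cases hij : p = i ∧ q = j
        · obtain ⟨rfl, rfl⟩ := hij
          rw [if_pos h]
        · rw [Matrix.single_apply_of_ne (h := hij), ite_self]
      rw [hb, hT1]
      ext i j
      by_cases hij : p = i ∧ q = j
      · obtain ⟨rfl, rfl⟩ := hij
        simp [hc, h]
      · rw [Matrix.smul_apply, Matrix.of_apply, Matrix.single_apply_of_ne (h := hij)]
        simp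
    · have hb : blockProj u s m (Matrix.single p q (1:ℂ)) = 0 := by
        ext i j
        show (if i.1.1 = j.1.1 then Matrix.single p q (1:ℂ) i j else 0) = 0
        by_cases hij : p = i ∧ q = j
        · obtain ⟨rfl, rfl⟩ := hij
          rw [if_neg h]
        · rw [Matrix.single_apply_of_ne (h := hij), ite_self]
      rw [hb, map_zero, hc]
      simp [h]
  have key2 : LinearMap.trace ℂ Mat F = ∑ i : PyrIdx u s m × PyrIdx u s m, c i := by
    rw [LinearMap.trace_eq_matrix_trace ℂ (Matrix.stdBasis ℂ (PyrIdx u s m) (PyrIdx u s m)) F,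
      Matrix.trace]
    refine Finset.sum_congr rfl fun i _ => ?_
    rw [Matrix.diag]
    rw [LinearMap.toMatrix_apply, heig i, _root_.map_smul, Module.Basis.repr_self]
    simp
  rw [key1, key2, hc]

/-- Lemma 4.23: for diagonal elements `x, y` of `g₀` whose entries depend only on
the row (second coordinate) and sum to zero, the Killing form of `g₀` (the trace on `g₀` of
`ad x ∘ ad y`) satisfies `κ_{g₀}(x, y) = (2n/u)·Σ_{p} x_p y_p`, where `n = mu + s`. -/
theorem killing_form_row_diagonal (u s m : ℕ) (hu : 2 ≤ u) (hs1 : 1 ≤ s) (hs2 : s ≤ u - 1)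
    (hm : 1 ≤ m) (ξ η : Fin (m + 1) → ℂ)
    (hξ : ∑ p : PyrIdx u s m, ξ p.1.2 = 0)
    (hη : ∑ p : PyrIdx u s m, η p.1.2 = 0)
    (x y : ↥(g0 u s m))
    (hx : (x : Matrix (PyrIdx u s m) (PyrIdx u s m) ℂ) = Matrix.diagonal fun p => ξ p.1.2)
    (hy : (y : Matrix (PyrIdx u s m) (PyrIdx u s m) ℂ) = Matrix.diagonal fun p => η p.1.2) :
    killingForm ℂ ↥(g0 u s m) x y
      = (2 * ((m * u + s : ℕ) : ℂ) / (u : ℂ)) * ∑ p : PyrIdx u s m, ξ p.1.2 * η p.1.2 := by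
  classical
  have hsu : s < u := by omega
  have hkill := killing_eq u s m hu hs1 ξ η x y hx hy
  rw [hkill, double_pyr u s m hsu ξ η]
  set e := ξ (Fin.last m) with he
  set f := η (Fin.last m) with hf
  set Sx := ∑ k : Fin m, ξ k.castSucc with hSx
  set Sy := ∑ k : Fin m, η k.castSucc with hSy
  set Q' := ∑ k : Fin m, ξ k.castSucc * η k.castSucc with hQ'
  have hW1 : (∑ k : Fin (m+1), ∑ l : Fin (m+1), (ξ k - ξ l)*(η k - η l))
      = 2*((m:ℂ)+1)*(Q' + e*f) - 2*(Sx+e)*(Sy+f) := by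
    rw [double_sum_aux (Fin (m+1)) ξ η, Fintype.card_fin,
      Fin.sum_univ_castSucc (f := fun k => ξ k * η k),
      Fin.sum_univ_castSucc (f := ξ), Fin.sum_univ_castSucc (f := η)]
    push_cast
    ring
  have hW2 : (∑ k : Fin m, ∑ l : Fin m,
        (ξ k.castSucc - ξ l.castSucc)*(η k.castSucc - η l.castSucc))
      = 2*(m:ℂ)*Q' - 2*Sx*Sy := by
    rw [double_sum_aux (Fin m) (fun k => ξ k.castSucc) (fun k => η k.castSucc),
      Fintype.card_fin]
  have hc1 : (s:ℂ)*e + (u:ℂ)*Sx = 0 := by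
    have h := (sum_pyr_row u s m hsu ξ).symm.trans hξ
    linear_combination h
  have hc2 : (s:ℂ)*f + (u:ℂ)*Sy = 0 := by
    have h := (sum_pyr_row u s m hsu η).symm.trans hη
    linear_combination h
  have hRHS : (∑ p : PyrIdx u s m, ξ p.1.2 * η p.1.2) = (s:ℂ)*(e*f) + (u:ℂ)*Q' :=
    sum_pyr_row u s m hsu (fun k => ξ k * η k)
  rw [hW1, hW2, hRHS]
  exact final_algebra u s m (by omega) Q' e f Sx Sy hc1 hc2
end

section
/- Fix integers u ≥ 2, 1 ≤ s ≤ u−1, m ≥ 1. Let P = {(c,k) : 0 ≤ c < u, 0 ≤ k < h_c} where h_c = m+1 if c < s and h_c = m otherwise, and let g₀ be the complex Lie algebra of trace-zero P × P matrices A with A_{pq} = 0 unless p and q have the same first coordinate. Let x, y ∈ g₀ be diagonal matrices supported on the short row {(c, m) : 0 ≤ c < s}: x_{(c,m)} = ξ_c and y_{(c,m)} = η_c for c < s with Σ_{c<s} ξ_c = Σ_{c<s} η_c = 0, and all other entries zero. Then the Killing form of g₀ satisfies κ_{g₀}(x, y) = 2m·Σ_{c<s} ξ_c η_c, where κ_{g₀}(x,y)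 is the trace on g₀ of (ad x)∘(ad y). -/
attribute [local instance 100] LieRing.ofAssociativeRing

/-! ### Auxiliary definitions for the Killing form computation. -/

/-- Diagonal entry function on the ambient index set. -/
def kfsrDD (u m : ℕ) (ξ : Fin u → ℂ) : Fin u × Fin (m + 1) → ℂ :=
  fun a => if (a.2 : ℕ) = m then ξ a.1 else 0

/-- The eigenvalue of `(ad x)(ad y)` on the ambient matrix unit `E_{ab}` (cut off outside
the column-diagonal blocks). -/
def kfsrLL (u m : ℕ) (ξ η : Fin u → ℂ) : Fin u × Fin (m + 1) → Fin u × Fin (m + 1) → ℂ :=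
  fun a b => if a.1 = b.1 then (kfsrDD u m ξ a - kfsrDD u m ξ b) * (kfsrDD u m η a - kfsrDD u m η b)
    else 0

/-- Restriction of `kfsrLL` to pyramid boxes. -/
def kfsrL (u s m : ℕ) (ξ η : Fin u → ℂ) : PyrIdx u s m → PyrIdx u s m → ℂ :=
  fun p q => kfsrLL u m ξ η p.1 q.1

/-- The entrywise multiplication operator with coefficients `kfsrL`. -/
def kfsrG (u s m : ℕ) (ξ η : Fin u → ℂ) :
    Matrix (PyrIdx u s m) (PyrIdx u s m) ℂ →ₗ[ℂ] Matrix (PyrIdx u s m) (PyrIdx u s m) ℂ where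
  toFun A := Matrix.of fun p q => kfsrL u s m ξ η p q * A p q
  map_add' A B := by ext p q; simp [Matrix.add_apply, mul_add]
  map_smul' c A := by ext p q; simp [Matrix.smul_apply]; ring

lemma kfsrG_apply (u s m : ℕ) (ξ η : Fin u → ℂ) (A : Matrix (PyrIdx u s m) (PyrIdx u s m) ℂ)
    (p q : PyrIdx u s m) : kfsrG u s m ξ η A p q = kfsrL u s m ξ η p q * A p q := rfl

lemma kfsrL_diag (u s m : ℕ) (ξ η : Fin u → ℂ) (p : PyrIdx u s m) :
    kfsrL u s m ξ η p p = 0 := by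
  simp [kfsrL, kfsrLL]

lemma kfsrG_mem (u s m : ℕ) (ξ η : Fin u → ℂ) (A : Matrix (PyrIdx u s m) (PyrIdx u s m) ℂ) :
    kfsrG u s m ξ η A ∈ (g0 u s m).toSubmodule := by
  refine ⟨?_, ?_⟩
  · simp [Matrix.trace, Matrix.diag, kfsrG_apply, kfsrL_diag]
  · intro p q h
    rw [kfsrG_apply]
    simp [kfsrL, kfsrLL, h]

lemma kfsrG_stdBasis (u s m : ℕ) (ξ η : Fin u → ℂ) (i : PyrIdx u s m × PyrIdx u s m) :
    kfsrG u s m ξ η (Matrix.stdBasis ℂ (PyrIdx u s m) (PyrIdx u s m) i)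
      = kfsrL u s m ξ η i.1 i.2 • Matrix.stdBasis ℂ (PyrIdx u s m) (PyrIdx u s m) i := by
  classical
  obtain ⟨i1, i2⟩ := i
  rw [Matrix.stdBasis_eq_single]
  ext p q
  rw [Matrix.smul_apply, kfsrG_apply]
  by_cases h : i1 = p ∧ i2 = q
  · obtain ⟨h1, h2⟩ := h
    subst h1; subst h2
    simp [Matrix.single]
  · simp [Matrix.single, h]

lemma kfsrG_trace (u s m : ℕ) (ξ η : Fin u → ℂ) :
    LinearMap.trace ℂ _ (kfsrG u s m ξ η)
      = ∑ p : PyrIdx u s m, ∑ q : PyrIdx u s m, kfsrL u s m ξ η p q := by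
  classical
  rw [LinearMap.trace_eq_matrix_trace ℂ (Matrix.stdBasis ℂ (PyrIdx u s m) (PyrIdx u s m)),
    Matrix.trace, ← Fintype.sum_prod_type']
  refine Fintype.sum_congr _ _ fun i => ?_
  rw [Matrix.diag, LinearMap.toMatrix_apply, kfsrG_stdBasis, map_smul, Module.Basis.repr_self]
  simp

/-- Summing a function of the box over the pyramid as an ambient sum. -/
lemma kfsrSumA (u s m : ℕ) (f : Fin u × Fin (m + 1) → ℂ) :
    ∑ p : PyrIdx u s m, f p.1
      = ∑ a : Fin u × Fin (m + 1),
          if (a.2 : ℕ) < (if (a.1 : ℕ) < s then m + 1 else m) then f a else 0 := by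
  classical
  rw [← Finset.sum_filter]
  exact (Finset.sum_subtype _ (by simp) f).symm

lemma kfsrTwoM (m : ℕ) (a b : ℂ) :
    (∑ k : Fin (m + 1), ∑ k' : Fin (m + 1),
      ((if (k : ℕ) = m then a else 0) - (if (k' : ℕ) = m then a else 0)) *
      ((if (k : ℕ) = m then b else 0) - (if (k' : ℕ) = m then b else 0)))
    = 2 * m * (a * b) := by
  have hne : ∀ i : Fin m, ¬((i : ℕ) = m) := fun i => Nat.ne_of_lt i.isLt
  simp [Fin.sum_univ_castSucc, hne]
  ring

lemma kfsrInner (u s m : ℕ) (ξ η : Fin u → ℂ) (c : Fin u) (k : Fin (m + 1)) :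
    (∑ c' : Fin u, ∑ k' : Fin (m + 1),
        if (k' : ℕ) < (if (c' : ℕ) < s then m + 1 else m) then kfsrLL u m ξ η (c, k) (c', k')
        else 0)
      = ∑ k' : Fin (m + 1),
          if (k' : ℕ) < (if (c : ℕ) < s then m + 1 else m) then
            (kfsrDD u m ξ (c, k) - kfsrDD u m ξ (c, k')) *
              (kfsrDD u m η (c, k) - kfsrDD u m η (c, k'))
          else 0 := by
  classical
  rw [Finset.sum_eq_single c]
  · refine Finset.sum_congr rfl fun k' _ => ?_
    simp [kfsrLL]
  · intro b _ hb
    refine Finset.sum_eq_zero fun k' _ => ?_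
    have h0 : kfsrLL u m ξ η (c, k) (b, k') = 0 := if_neg (fun h => hb h.symm)
    rw [h0, ite_self]
  · simp

lemma kfsrCol (u s m : ℕ) (ξ η : Fin u → ℂ) (c : Fin u) :
    (∑ k : Fin (m + 1),
        if (k : ℕ) < (if (c : ℕ) < s then m + 1 else m) then
          (∑ k' : Fin (m + 1),
            if (k' : ℕ) < (if (c : ℕ) < s then m + 1 else m) then
              (kfsrDD u m ξ (c, k) - kfsrDD u m ξ (c, k')) *
                (kfsrDD u m η (c, k) - kfsrDD u m η (c, k'))
            else 0)
        else 0)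
      = if (c : ℕ) < s then 2 * m * (ξ c * η c) else 0 := by
  classical
  by_cases hcs : (c : ℕ) < s
  · rw [if_pos hcs]
    simp only [if_pos hcs, Fin.is_lt, if_true]
    simpa [kfsrDD] using kfsrTwoM m (ξ c) (η c)
  · rw [if_neg hcs]
    simp only [if_neg hcs]
    refine Finset.sum_eq_zero fun k _ => ?_
    by_cases hk : (k : ℕ) < m
    · rw [if_pos hk]
      refine Finset.sum_eq_zero fun k' _ => ?_
      by_cases hk' : (k' : ℕ) < m
      · rw [if_pos hk']
        simp [kfsrDD, Nat.ne_of_lt hk, Nat.ne_of_lt hk']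
      · rw [if_neg hk']
    · rw [if_neg hk]

lemma kfsrSum (u s m : ℕ) (ξ η : Fin u → ℂ) :
    (∑ p : PyrIdx u s m, ∑ q : PyrIdx u s m, kfsrL u s m ξ η p q)
      = 2 * m * ∑ c ∈ Finset.univ.filter (fun c : Fin u => (c : ℕ) < s), ξ c * η c := by
  classical
  have h1 : ∀ p : PyrIdx u s m,
      (∑ q : PyrIdx u s m, kfsrL u s m ξ η p q)
        = ∑ b : Fin u × Fin (m + 1),
            if (b.2 : ℕ) < (if (b.1 : ℕ) < s then m + 1 else m) then kfsrLL u m ξ η p.1 b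
            else 0 :=
    fun p => kfsrSumA u s m (fun b => kfsrLL u m ξ η p.1 b)
  calc ∑ p : PyrIdx u s m, ∑ q : PyrIdx u s m, kfsrL u s m ξ η p q
      = ∑ p : PyrIdx u s m,
          ∑ b : Fin u × Fin (m + 1),
            if (b.2 : ℕ) < (if (b.1 : ℕ) < s then m + 1 else m) then kfsrLL u m ξ η p.1 b
            else 0 := Finset.sum_congr rfl fun p _ => h1 p
    _ = ∑ a : Fin u × Fin (m + 1),
          if (a.2 : ℕ) < (if (a.1 : ℕ) < s then m + 1 else m) then
            (∑ b : Fin u × Fin (m + 1),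
              if (b.2 : ℕ) < (if (b.1 : ℕ) < s then m + 1 else m) then kfsrLL u m ξ η a b
              else 0)
          else 0 := kfsrSumA u s m (fun a => ∑ b : Fin u × Fin (m + 1),
            if (b.2 : ℕ) < (if (b.1 : ℕ) < s then m + 1 else m) then kfsrLL u m ξ η a b
            else 0)
    _ = ∑ c : Fin u, ∑ k : Fin (m + 1),
          if (k : ℕ) < (if (c : ℕ) < s then m + 1 else m) then
            (∑ b : Fin u × Fin (m + 1),
              if (b.2 : ℕ) < (if (b.1 : ℕ) < s then m + 1 else m) then kfsrLL u m ξ η (c, k) b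
              else 0)
          else 0 := by rw [Fintype.sum_prod_type]
    _ = ∑ c : Fin u, if (c : ℕ) < s then 2 * m * (ξ c * η c) else 0 := by
          refine Finset.sum_congr rfl fun c _ => ?_
          rw [← kfsrCol u s m ξ η c]
          refine Finset.sum_congr rfl fun k _ => ?_
          by_cases hk : (k : ℕ) < (if (c : ℕ) < s then m + 1 else m)
          · rw [if_pos hk, if_pos hk, Fintype.sum_prod_type, kfsrInner]
          · rw [if_neg hk, if_neg hk]
    _ = 2 * m * ∑ c ∈ Finset.univ.filter (fun c : Fin u => (c : ℕ) < s), ξ c * η c := by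
          rw [Finset.mul_sum, Finset.sum_filter]

/-- Lemma 4.24 part (1): for diagonal elements `x, y` of `g₀` supported on the
short row `{(c, m) : c < s}`, with entries `ξ_c`, `η_c` summing to zero, the Killing form of
`g₀` satisfies `κ_{g₀}(x, y) = 2m·Σ_{c<s} ξ_c η_c`. -/
theorem killing_form_short_row (u s m : ℕ) (hu : 2 ≤ u) (hs1 : 1 ≤ s) (hs2 : s ≤ u - 1)
    (hm : 1 ≤ m) (ξ η : Fin u → ℂ)
    (hξ : ∑ c ∈ Finset.univ.filter (fun c : Fin u => (c : ℕ) < s), ξ c = 0)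
    (hη : ∑ c ∈ Finset.univ.filter (fun c : Fin u => (c : ℕ) < s), η c = 0)
    (x y : ↥(g0 u s m))
    (hx : (x : Matrix (PyrIdx u s m) (PyrIdx u s m) ℂ)
      = Matrix.diagonal fun p => if (p.1.2 : ℕ) = m then ξ p.1.1 else 0)
    (hy : (y : Matrix (PyrIdx u s m) (PyrIdx u s m) ℂ)
      = Matrix.diagonal fun p => if (p.1.2 : ℕ) = m then η p.1.1 else 0) :
    killingForm ℂ ↥(g0 u s m) x y
      = 2 * (m : ℂ) * ∑ c ∈ Finset.univ.filter (fun c : Fin u => (c : ℕ) < s), ξ c * η c := by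
  classical
  have hbr : ∀ (f : PyrIdx u s m → ℂ) (A : Matrix (PyrIdx u s m) (PyrIdx u s m) ℂ)
      (p q : PyrIdx u s m),
      (⁅Matrix.diagonal f, A⁆ : Matrix (PyrIdx u s m) (PyrIdx u s m) ℂ) p q
        = (f p - f q) * A p q := by
    intro f A p q
    rw [Ring.lie_def]
    simp only [Matrix.sub_apply, Matrix.diagonal_mul, Matrix.mul_diagonal]
    ring
  have hkey : ∀ z : ↥(g0 u s m),
      ⁅(x : Matrix (PyrIdx u s m) (PyrIdx u s m) ℂ),
        ⁅(y : Matrix (PyrIdx u s m) (PyrIdx u s m) ℂ),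
          (z : Matrix (PyrIdx u s m) (PyrIdx u s m) ℂ)⁆⁆
        = kfsrG u s m ξ η (z : Matrix (PyrIdx u s m) (PyrIdx u s m) ℂ) := by
    intro z
    ext p q
    rw [hx, hy, hbr, hbr, kfsrG_apply]
    by_cases hc : p.1.1 = q.1.1
    · simp only [kfsrL, kfsrLL, kfsrDD, if_pos hc]
      ring
    · rw [z.2.2 p q hc]
      simp [kfsrL, kfsrLL, hc]
  have hmem' : ∀ A ∈ (g0 u s m).toSubmodule, kfsrG u s m ξ η A ∈ (g0 u s m).toSubmodule :=
    fun A _ => kfsrG_mem u s m ξ η A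
  have hcomp : (LieAlgebra.ad ℂ ↥(g0 u s m) x) ∘ₗ (LieAlgebra.ad ℂ ↥(g0 u s m) y)
      = (kfsrG u s m ξ η).restrict hmem' := by
    refine LinearMap.ext fun z => Subtype.ext ?_
    show (⁅x, ⁅y, z⁆⁆ : ↥(g0 u s m)).val = kfsrG u s m ξ η z.val
    rw [LieSubalgebra.coe_bracket, LieSubalgebra.coe_bracket]
    exact hkey z
  rw [killingForm_apply_apply, hcomp]
  exact (LinearMap.trace_restrict_eq_of_forall_mem ((g0 u s m).toSubmodule)
    (kfsrG u s m ξ η) (kfsrG_mem u s m ξ η) hmem').trans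
    (by rw [kfsrG_trace, kfsrSum])
end
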